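/- arXiv:1912.10699 — 3 statements merged into one kernel-verified Lean document; each statement's English description precedes it below -/
import Mathlib

section
/- There exist absolute constants c₁,c₂>0 such that for every N∈ℕ, every p∈(0,1), every β>0, every function g:Γ_N→[0,∞) not identically zero, and every t>0, ℙ_J( |N(F_{N,g}−p_{N,g})| ≥ t ) ≤ c₁·exp(−2c₂p²t²/β²). -/
open MeasureTheory Filter Finset
open scoped Classical ENNReal NNReal Topology

noncomputable section

namespace RDCW

/-- The real value of a Boolean spin. -/
def spin (b : Bool) : ℝ := if b then 1 else -1

/-- Spin configurations on `N` vertices. -/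
abbrev Conf (N : ℕ) := Fin N → Bool

/-- Empirical magnetisation. -/
def mag {N : ℕ} (σ : Conf N) : ℝ := (N : ℝ)⁻¹ * ∑ i, spin (σ i)

/-- The set `Γ_N` of attainable magnetisations. -/
def Gamma (N : ℕ) : Set ℝ := Set.range (fun σ : Conf N => mag σ)

/-- `Γ_N` as a finite set. -/
def GammaF (N : ℕ) : Finset ℝ :=
  Finset.image (fun σ : Conf N => mag σ) Finset.univ

/-- Configurations with magnetisation `m`, as a finset. -/
def level (N : ℕ) (m : ℝ) : Finset (Conf N) := Finset.univ.filter fun σ => mag σ = m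

/-- Configurations with magnetisation `m`, as a set (`S_N[m]`). -/
def SLev (N : ℕ) (m : ℝ) : Set (Conf N) := {σ | mag σ = m}

/-- The entropy `I_N(m) = -(1/N) log |S_N[m]|`
(for `m ∈ Γ_N` the cardinality is the binomial coefficient `C(N, (1+m)N/2)`). -/
def IN (N : ℕ) (m : ℝ) : ℝ := -(N : ℝ)⁻¹ * Real.log ((level N m).card)

/-- Two configurations differ by a single spin flip. -/
def Nbr {N : ℕ} (σ σ' : Conf N) : Prop :=
  (Finset.univ.filter fun i => σ i ≠ σ' i).card = 1

/-- The index set of the couplings: pairs `i < j`. -/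
abbrev CIdx (N : ℕ) := {ij : Fin N × Fin N // ij.1 < ij.2}

/-- A realisation of the random couplings. -/
abbrev Couplings (N : ℕ) := CIdx N → Bool

/-- Real value of a coupling. -/
def Jval {N : ℕ} (J : Couplings N) (e : CIdx N) : ℝ := if J e then 1 else 0

/-- The RDCW Hamiltonian. -/
def H (N : ℕ) (p h : ℝ) (J : Couplings N) (σ : Conf N) : ℝ :=
  -((N : ℝ) * p)⁻¹ * ∑ e : CIdx N, Jval J e * spin (σ e.1.1) * spin (σ e.1.2)
    - h * ∑ i, spin (σ i)

/-- The Curie--Weiss Hamiltonian. -/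
def Hcw (N : ℕ) (h : ℝ) (σ : Conf N) : ℝ :=
  -(N : ℝ)⁻¹ * ∑ e : CIdx N, spin (σ e.1.1) * spin (σ e.1.2) - h * ∑ i, spin (σ i)

/-- The centred random part `Δ` of the Hamiltonian. -/
def Delta (N : ℕ) (p : ℝ) (J : Couplings N) (σ : Conf N) : ℝ :=
  -((N : ℝ) * p)⁻¹ * ∑ e : CIdx N, (Jval J e - p) * spin (σ e.1.1) * spin (σ e.1.2)

/-- Partition function for a Hamiltonian. -/
def Z (N : ℕ) (β : ℝ) (Ham : Conf N → ℝ) : ℝ := ∑ σ : Conf N, Real.exp (-β * Ham σ)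

/-- Gibbs measure for a Hamiltonian. -/
def gibbs (N : ℕ) (β : ℝ) (Ham : Conf N → ℝ) (σ : Conf N) : ℝ :=
  Real.exp (-β * Ham σ) / Z N β Ham

/-- Off-diagonal Metropolis rates. -/
def flipP (N : ℕ) (β : ℝ) (Ham : Conf N → ℝ) (σ σ' : Conf N) : ℝ :=
  if Nbr σ σ' then (N : ℝ)⁻¹ * Real.exp (-β * max (Ham σ' - Ham σ) 0) else 0

/-- Metropolis (Glauber) transition probabilities. -/
def transP (N : ℕ) (β : ℝ) (Ham : Conf N → ℝ) (σ σ' : Conf N) : ℝ :=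
  if σ' = σ then 1 - ∑ η ∈ Finset.univ.erase σ, flipP N β Ham σ η
  else flipP N β Ham σ σ'

/-- Probability of a finite trajectory of a Markov chain with kernel `P`. -/
def pathProb {S : Type*} (P : S → S → ℝ) : S → List S → ℝ
  | _, [] => 1
  | x, y :: l => P x y * pathProb P y l

/-- `FirstHit A B l` says that the (time ≥ 1) trajectory `l` stays outside `A ∪ B`
until its final state, which belongs to `B`; this is the cylinder event
`{τ_B < τ_A, τ_B = l.length}`. -/
def FirstHit {S : Type*} (A B : Set S) : List S → Prop
  | [] => False
  | [x] => x ∈ B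
  | x :: y :: l => x ∉ A ∧ x ∉ B ∧ FirstHit A B (y :: l)

/-- `ℙ_σ(τ_B < τ_A)` for the chain with kernel `P`. -/
def hitProb {S : Type*} (P : S → S → ℝ) (σ : S) (A B : Set S) : ℝ :=
  ∑' l : List S, if FirstHit A B l then pathProb P σ l else 0

/-- `𝔼_σ[τ_B]` for the chain with kernel `P`. -/
def hitTimeExp {S : Type*} (P : S → S → ℝ) (σ : S) (B : Set S) : ℝ :=
  ∑' l : List S, if FirstHit (∅ : Set S) B l then (l.length : ℝ) * pathProb P σ l else 0

/-- The harmonic function `h_{A,B}`. -/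
def harm {S : Type*} (P : S → S → ℝ) (A B : Set S) (σ : S) : ℝ :=
  if σ ∈ A then 1 else if σ ∈ B then 0 else hitProb P σ B A

/-- Capacity via the Dirichlet principle. -/
def capac (N : ℕ) (β : ℝ) (Ham : Conf N → ℝ) (A B : Set (Conf N)) : ℝ :=
  sInf {x : ℝ | ∃ f : Conf N → ℝ, (∀ σ, 0 ≤ f σ ∧ f σ ≤ 1) ∧
    (∀ σ ∈ A, f σ = 1) ∧ (∀ σ ∈ B, f σ = 0) ∧
    x = ∑ σ : Conf N, ∑ σ' : Conf N,
      gibbs N β Ham σ * transP N β Ham σ σ' * (f σ - f σ') ^ 2}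

/-- Bernoulli measure on `Bool`. -/
def bern (p : ℝ) : Measure Bool :=
  p.toNNReal • Measure.dirac true + (1 - p).toNNReal • Measure.dirac false

instance (p : ℝ) : IsFiniteMeasure (bern p) := by unfold bern; infer_instance

/-- The joint law `ℙ_J` of the i.i.d. Bernoulli(p) couplings. -/
def PJ (N : ℕ) (p : ℝ) : Measure (Couplings N) := Measure.pi fun _ => bern p

/-- `E(m) = -m²/2 - hm`. -/
def Em (h m : ℝ) : ℝ := -m ^ 2 / 2 - h * m

/-- Transition probabilities of the Curie--Weiss magnetisation chain on `ℝ ⊇ Γ_N`. -/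
def rCW (N : ℕ) (β h : ℝ) (m m' : ℝ) : ℝ :=
  if m' = m + 2 / N then Real.exp (-β * N * max (Em h m' - Em h m) 0) * ((1 - m) / 2)
  else if m' = m - 2 / N then Real.exp (-β * N * max (Em h m' - Em h m) 0) * ((1 + m) / 2)
  else if m' = m then
    1 - Real.exp (-β * N * max (Em h (m + 2 / N) - Em h m) 0) * ((1 - m) / 2)
      - Real.exp (-β * N * max (Em h (m - 2 / N) - Em h m) 0) * ((1 + m) / 2)
  else 0

/-- The entropy `I(m)`. -/
def Ient (m : ℝ) : ℝ :=
  (1 - m) / 2 * Real.log ((1 - m) / 2) + (1 + m) / 2 * Real.log ((1 + m) / 2)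

/-- The Curie--Weiss free energy `f_β(m) = E(m) + β⁻¹ I(m)`. -/
def fE (β h m : ℝ) : ℝ := Em h m + β⁻¹ * Ient m

/-- The double-well structure of `f_β` in the metastable regime `β > 1`, `h > 0` small:
two local minima `m_- < 0 < m_+` and a local maximum `m* ∈ (m_-, m_+)`, all solving
`m = tanh(β(m+h))`, with `f_β(m_-) > f_β(m_+)`. -/
structure DoubleWell (β h mminus mstar mplus : ℝ) : Prop where
  lt_star : mminus < mstar
  star_lt : mstar < mplus
  neg : mminus < 0
  pos : 0 < mplus
  locmin_minus : IsLocalMin (fE β h) mminus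
  locmin_plus : IsLocalMin (fE β h) mplus
  locmax_star : IsLocalMax (fE β h) mstar
  fix_minus : mminus = Real.tanh (β * (mminus + h))
  fix_star : mstar = Real.tanh (β * (mstar + h))
  fix_plus : mplus = Real.tanh (β * (mplus + h))
  f_lt : fE β h mplus < fE β h mminus

/-- `y` is a point of `s` closest to `x`. -/
def ClosestIn (s : Set ℝ) (x y : ℝ) : Prop := y ∈ s ∧ ∀ z ∈ s, |x - y| ≤ |x - z|

/-- `α = β²(1-p)/(4p)`. -/
def alphaC (β p : ℝ) : ℝ := β ^ 2 * (1 - p) / (4 * p)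

/-- `κ = α + sup_{η∈(0,1)} [log η - β √(2α + log(c₁/(1-η)²)) / (p √(2c₂))]`. -/
def kappaC (β p c₁ c₂ : ℝ) : ℝ :=
  alphaC β p + sSup ((fun η : ℝ => Real.log η -
      β * Real.sqrt (2 * alphaC β p + Real.log (c₁ / (1 - η) ^ 2)) /
        (p * Real.sqrt (2 * c₂))) '' Set.Ioo (0 : ℝ) 1)

/-- Talagrand's concentration inequality with constants `c₁, c₂`: for every `M`, every
convex function `G` which is 1-Lipschitz w.r.t. the Euclidean norm, and independent
random variables `X₁, …, X_M` (jointly a product measure) bounded by `K`,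
`ℙ(|G(X) - 𝔼 G(X)| ≥ tK) ≤ c₁ e^{-c₂ t²}`. -/
def IsTalagrand (c₁ c₂ : ℝ) : Prop :=
  ∀ (M : ℕ) (G : (Fin M → ℝ) → ℝ),
    ConvexOn ℝ Set.univ G →
    (∀ x y : Fin M → ℝ, |G x - G y| ≤ Real.sqrt (∑ i, (x i - y i) ^ 2)) →
    ∀ (μ : Fin M → Measure ℝ) [∀ i, IsProbabilityMeasure (μ i)],
      ∀ K : ℝ, 0 < K → (∀ i, ∀ᵐ x ∂μ i, |x| ≤ K) →
        ∀ t : ℝ, 0 ≤ t →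
          (Measure.pi μ {x | t * K ≤ |G x - ∫ y, G y ∂Measure.pi μ|}).toReal ≤
            c₁ * Real.exp (-c₂ * t ^ 2)

/-- `𝒵_{N,g}` (with `e^{-βΔ}`). -/
def Zg (N : ℕ) (p β : ℝ) (g : ℝ → ℝ) (J : Couplings N) : ℝ :=
  ∑ m ∈ GammaF N, g m * ∑ σ ∈ level N m, Real.exp (-β * Delta N p J σ)

/-- The variant of `𝒵_{N,g}` with `e^{+βΔ}`. -/
def ZgPlus (N : ℕ) (p β : ℝ) (g : ℝ → ℝ) (J : Couplings N) : ℝ :=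
  ∑ m ∈ GammaF N, g m * ∑ σ ∈ level N m, Real.exp (β * Delta N p J σ)

/-- `F_{N,g} = (1/N) log 𝒵_{N,g}`. -/
def Fg (N : ℕ) (p β : ℝ) (g : ℝ → ℝ) (J : Couplings N) : ℝ :=
  (N : ℝ)⁻¹ * Real.log (Zg N p β g J)

/-- `p_{N,g} = 𝔼[F_{N,g}]`. -/
def pg (N : ℕ) (p β : ℝ) (g : ℝ → ℝ) : ℝ := ∫ J, Fg N p β g J ∂PJ N p

/-- `∑_{m∈Γ_N} g(m) e^{-N I_N(m)}`. -/
def entSum (N : ℕ) (g : ℝ → ℝ) : ℝ := ∑ m ∈ GammaF N, g m * Real.exp (-(N : ℝ) * IN N m)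

/-- Mesoscopic measure `Q_{β,N}(m)`. -/
def Qmeso (N : ℕ) (β : ℝ) (Ham : Conf N → ℝ) (m : ℝ) : ℝ :=
  ∑ σ ∈ level N m, gibbs N β Ham σ

/-- `𝔼_{ν_{A,B}}[τ_B]`, where `ν_{A,B}` is the last-exit biased distribution on `A`. -/
def lastExitMeanHit (N : ℕ) (β : ℝ) (Ham : Conf N → ℝ) (A B : Set (Conf N)) : ℝ :=
  (∑ σ ∈ Finset.univ.filter (· ∈ A),
      gibbs N β Ham σ * hitProb (transP N β Ham) σ A B * hitTimeExp (transP N β Ham) σ B) /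
  (∑ σ ∈ Finset.univ.filter (· ∈ A), gibbs N β Ham σ * hitProb (transP N β Ham) σ A B)

/-- The unit flow `φ_N` on the magnetisation space. -/
def phiFlow (N : ℕ) (m₁ m₂ m m' : ℝ) : ℝ :=
  if m' = m + 2 / N ∧ m₁ ≤ m ∧ m ≤ m₂ - 2 / N then
    ((1 - m) * N / 2 * Real.exp (-(N : ℝ) * IN N m))⁻¹
  else if m' = m - 2 / N ∧ m₁ + 2 / N ≤ m ∧ m ≤ m₂ then
    -((1 + m) * N / 2 * Real.exp (-(N : ℝ) * IN N m))⁻¹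
  else 0

/-- `U_δ = {m ∈ [-1,1] : f_β(m) ≤ f_β(m_-) + δ}`. -/
def Uset (β h mminus δ : ℝ) : Set ℝ :=
  {m | m ∈ Set.Icc (-1 : ℝ) 1 ∧ fE β h m ≤ fE β h mminus + δ}

/-- `U_δ(m_+)`: the connected component of `U_δ` containing `m_+`. -/
def Ucomp (β h mminus mplus δ : ℝ) : Set ℝ := connectedComponentIn (Uset β h mminus δ) mplus

/-- The function `ℓ_N`. -/
def ellN (β h mpN x : ℝ) : ℝ :=
  (1 / 2) * (x * (Real.log 2 + β * |2 - 2 * h| + 1)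
    - (1 - mpN + x) * Real.log (1 - mpN + x) + (1 - mpN) * Real.log (1 - mpN))

/-- Specification of `δ_N`. -/
def DeltaNSpec (β h mminus mplus δ : ℝ) (N : ℕ) (d : ℝ) : Prop :=
  IsGreatest {d' : ℝ | 0 < d' ∧ d' ≤ δ ∧
    ∃ m ∈ Ucomp β h mminus mplus δ ∩ Gamma N, m < mplus ∧ fE β h m = fE β h mminus + d'} d

/-- Specification of `m_{δ_N}`: the left endpoint of `U_{δ_N}(m_+) ∩ Γ_N`,
with `f_β(m_{δ_N}) = f_β(m_-) + δ_N`. -/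
def MdeltaSpec (β h mminus mplus dN : ℝ) (N : ℕ) (x : ℝ) : Prop :=
  IsLeast (Ucomp β h mminus mplus dN ∩ Gamma N) x ∧ fE β h x = fE β h mminus + dN

/-- Specification of `ε_N`. -/
def EpsNSpec (β h mminus mplus dN ε : ℝ) (N : ℕ) (e : ℝ) : Prop :=
  IsGreatest {e' : ℝ | 0 < e' ∧ e' ≤ ε ∧
    ∃ m ∈ Ucomp β h mminus mplus dN ∩ Gamma N, m < mplus ∧ fE β h m = fE β h mplus + e'} e

/-- Specification of `m_{ε_N}`. -/
def MepsSpec (β h mminus mplus dN eN : ℝ) (N : ℕ) (x : ℝ) : Prop :=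
  x ∈ Ucomp β h mminus mplus dN ∩ Gamma N ∧ x < mplus ∧ fE β h x = fE β h mplus + eN



/-! ### Auxiliary material for the concentration proof -/

namespace Conc

open Real Function

variable {p : ℝ}

/-- Bernoulli weight. -/
def bw (p : ℝ) (b : Bool) : ℝ := if b then p else 1 - p

lemma bw_nonneg (hp0 : 0 ≤ p) (hp1 : p ≤ 1) (b : Bool) : 0 ≤ bw p b := by
  cases b <;> simp [bw] <;> linarith

lemma bw_true : bw p true = p := rfl

lemma bw_false : bw p false = 1 - p := rfl

/-- Product Bernoulli weight. -/
def W {ι : Type*} [Fintype ι] (p : ℝ) (J : ι → Bool) : ℝ := ∏ i, bw p (J i)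

lemma W_nonneg {ι : Type*} [Fintype ι] (hp0 : 0 ≤ p) (hp1 : p ≤ 1) (J : ι → Bool) :
    0 ≤ W p J := Finset.prod_nonneg fun i _ => bw_nonneg hp0 hp1 (J i)

lemma W_cons {n : ℕ} (b : Bool) (K : Fin n → Bool) :
    W p (Fin.cons b K) = bw p b * W p K := by
  rw [W, Fin.prod_univ_succ]
  simp [W]

lemma sum_decomp {n : ℕ} (F : (Fin (n + 1) → Bool) → ℝ) :
    ∑ J, F J = ∑ K : Fin n → Bool, (F (Fin.cons true K) + F (Fin.cons false K)) := by
  rw [← Fintype.sum_equiv (Fin.consEquiv fun _ => Bool) (fun x => F (Fin.cons x.1 x.2)) F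
      (fun x => rfl), Fintype.sum_prod_type]
  rw [Fintype.sum_bool, ← Finset.sum_add_distrib]

/-- Hoeffding-type two point inequality (with a crude sub-Gaussian constant). -/
lemma twoPoint (q a b c : ℝ) (hq0 : 0 ≤ q) (hq1 : q ≤ 1)
    (hmean : q * a + (1 - q) * b = 0) (hab : |a - b| ≤ c) :
    q * Real.exp a + (1 - q) * Real.exp b ≤ Real.exp (c ^ 2 / 2) := by
  have hc0 : 0 ≤ c := le_trans (abs_nonneg _) hab
  rcases eq_or_lt_of_le hc0 with hc | hc
  · have hab' : a = b := by
      have := abs_nonpos_iff.mp (by rw [← hc] at hab; exact hab)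
      linarith [sub_eq_zero.mp this]
    have ha : a = 0 := by nlinarith
    have hb : b = 0 := by nlinarith
    simp [ha, hb, ← hc]
  · -- chord bound: for |x| ≤ c, exp x ≤ cosh c + x * (sinh c / c)
    have chord : ∀ x : ℝ, |x| ≤ c → Real.exp x ≤ Real.cosh c + x * (Real.sinh c / c) := by
      intro x hx
      obtain ⟨hx1, hx2⟩ := abs_le.mp hx
      set θ : ℝ := (x + c) / (2 * c) with hθ
      have hθ0 : 0 ≤ θ := div_nonneg (by linarith) (by linarith)
      have hθ1 : θ ≤ 1 := by rw [hθ, div_le_one (by linarith)]; linarith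
      have hxe : x = θ * c + (1 - θ) * (-c) := by
        rw [hθ]; field_simp; ring
      have hconv := convexOn_exp.2 (Set.mem_univ c) (Set.mem_univ (-c)) hθ0
        (by linarith : (0:ℝ) ≤ 1 - θ) (by ring)
      simp only [smul_eq_mul] at hconv
      calc Real.exp x = Real.exp (θ * c + (1 - θ) * (-c)) := by rw [← hxe]
        _ ≤ θ * Real.exp c + (1 - θ) * Real.exp (-c) := hconv
        _ = Real.cosh c + x * (Real.sinh c / c) := by
            rw [Real.cosh_eq, Real.sinh_eq, hθ]; field_simp; ring
    have ha : |a| ≤ c := by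
      have h1 : a = (1 - q) * (a - b) := by nlinarith
      rw [h1, abs_mul, abs_of_nonneg (by linarith : (0:ℝ) ≤ 1 - q)]
      nlinarith [abs_nonneg (a - b)]
    have hb : |b| ≤ c := by
      have h1 : b = -(q * (a - b)) := by nlinarith
      rw [h1, abs_neg, abs_mul, abs_of_nonneg hq0]
      nlinarith [abs_nonneg (a - b)]
    calc q * Real.exp a + (1 - q) * Real.exp b
        ≤ q * (Real.cosh c + a * (Real.sinh c / c)) +
            (1 - q) * (Real.cosh c + b * (Real.sinh c / c)) := by
          have h1 := chord a ha
          have h2 := chord b hb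
          nlinarith
      _ = Real.cosh c + (q * a + (1 - q) * b) * (Real.sinh c / c) := by ring
      _ = Real.cosh c := by rw [hmean]; ring
      _ ≤ Real.exp (c ^ 2 / 2) := Real.cosh_le_exp_half_sq c

/-- Sub-Gaussian bound for the moment generating function, by tensorization. -/
lemma mgf_fin (hp0 : 0 ≤ p) (hp1 : p ≤ 1) (c : ℝ) (hc : 0 ≤ c) :
    ∀ (n : ℕ) (f : (Fin n → Bool) → ℝ),
      (∀ i J, |f (update J i true) - f (update J i false)| ≤ c) →
      ∑ J, W p J * Real.exp (f J - ∑ K, W p K * f K) ≤ Real.exp (c ^ 2 * n / 2) := by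
  intro n
  induction n with
  | zero =>
    intro f _
    haveI : IsEmpty (Fin 0) := inferInstance
    have hW : ∀ J : Fin 0 → Bool, W p J = 1 := fun J => by simp [W]
    have huniq : ∀ J K : Fin 0 → Bool, J = K := fun J K => funext fun i => isEmptyElim i
    have hs : ∀ (G : (Fin 0 → Bool) → ℝ) (J₀ : Fin 0 → Bool), ∑ J, G J = G J₀ := by
      intro G J₀
      exact Finset.sum_eq_single_of_mem J₀ (Finset.mem_univ J₀)
        (fun K _ hK => absurd (huniq K J₀) hK)
    rw [hs _ (fun _ => false), hs (fun K => W p K * f K) (fun _ => false), hW]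
    simp
  | succ n ih =>
    intro f hf
    set μ : ℝ := ∑ K, W p K * f K with hμdef
    set g : (Fin n → Bool) → ℝ :=
      fun K => p * f (Fin.cons true K) + (1 - p) * f (Fin.cons false K) with hg
    have hgbd : ∀ i K, |g (update K i true) - g (update K i false)| ≤ c := by
      intro i K
      have h1 := hf i.succ (Fin.cons true K)
      have h2 := hf i.succ (Fin.cons false K)
      have : g (update K i true) - g (update K i false)
          = p * (f (update (Fin.cons true K) i.succ true)
              - f (update (Fin.cons true K) i.succ false))
            + (1 - p) * (f (update (Fin.cons false K) i.succ true)
              - f (update (Fin.cons false K) i.succ false)) := by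
        simp only [hg, Fin.cons_update]; ring
      rw [this]
      calc |_| ≤ |p * (f (update (Fin.cons true K) i.succ true)
              - f (update (Fin.cons true K) i.succ false))|
            + |(1 - p) * (f (update (Fin.cons false K) i.succ true)
              - f (update (Fin.cons false K) i.succ false))| := abs_add_le _ _
        _ ≤ p * c + (1 - p) * c := by
            rw [abs_mul, abs_mul, abs_of_nonneg hp0, abs_of_nonneg (by linarith : (0:ℝ) ≤ 1 - p)]
            have := mul_le_mul_of_nonneg_left h1 hp0
            have := mul_le_mul_of_nonneg_left h2 (by linarith : (0:ℝ) ≤ 1 - p)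
            linarith
        _ = c := by ring
    have hμg : ∑ K, W p K * g K = μ := by
      rw [hμdef, sum_decomp (fun J => W p J * f J)]
      refine Finset.sum_congr rfl fun K _ => ?_
      rw [W_cons, W_cons, bw_true, bw_false]
      simp only [hg]
      ring
    have key : ∀ K : Fin n → Bool,
        p * Real.exp (f (Fin.cons true K) - g K)
          + (1 - p) * Real.exp (f (Fin.cons false K) - g K) ≤ Real.exp (c ^ 2 / 2) := by
      intro K
      apply twoPoint p _ _ c hp0 hp1
      · simp only [hg]; ring
      · have h0 := hf 0 (Fin.cons true K)
        rw [Fin.update_cons_zero, Fin.update_cons_zero] at h0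
        have : f (Fin.cons true K) - g K - (f (Fin.cons false K) - g K)
            = f (Fin.cons true K) - f (Fin.cons false K) := by ring
        rw [this]
        exact h0
    calc ∑ J, W p J * Real.exp (f J - μ)
        = ∑ K : Fin n → Bool, W p K * Real.exp (g K - μ) *
            (p * Real.exp (f (Fin.cons true K) - g K)
              + (1 - p) * Real.exp (f (Fin.cons false K) - g K)) := by
          rw [sum_decomp (fun J => W p J * Real.exp (f J - μ))]
          refine Finset.sum_congr rfl fun K _ => ?_
          rw [W_cons, W_cons, bw_true, bw_false,
            show f (Fin.cons true K) - μ = (g K - μ) + (f (Fin.cons true K) - g K) by ring,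
            show f (Fin.cons false K) - μ = (g K - μ) + (f (Fin.cons false K) - g K) by ring,
            Real.exp_add, Real.exp_add]
          ring
      _ ≤ ∑ K : Fin n → Bool, W p K * Real.exp (g K - μ) * Real.exp (c ^ 2 / 2) := by
          refine Finset.sum_le_sum fun K _ => ?_
          refine mul_le_mul_of_nonneg_left (key K) ?_
          exact mul_nonneg (W_nonneg hp0 hp1 K) (Real.exp_pos _).le
      _ = Real.exp (c ^ 2 / 2) * ∑ K, W p K * Real.exp (g K - ∑ K', W p K' * g K') := by
          rw [hμg, Finset.mul_sum]
          exact Finset.sum_congr rfl fun K _ => by ring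
      _ ≤ Real.exp (c ^ 2 / 2) * Real.exp (c ^ 2 * n / 2) :=
          mul_le_mul_of_nonneg_left (ih g hgbd) (Real.exp_pos _).le
      _ = Real.exp (c ^ 2 * (n + 1 : ℕ) / 2) := by
          rw [← Real.exp_add]; congr 1; push_cast; ring

/-- One-sided Chernoff bound. -/
lemma chernoff_fin (hp0 : 0 ≤ p) (hp1 : p ≤ 1) {n : ℕ} (c t : ℝ) (hc : 0 < c) (ht : 0 < t)
    (f : (Fin n → Bool) → ℝ)
    (hf : ∀ i J, |f (update J i true) - f (update J i false)| ≤ c) :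
    ∑ J ∈ Finset.univ.filter (fun J => t ≤ f J - ∑ K, W p K * f K), W p J ≤
      Real.exp (-(t ^ 2 / (2 * c ^ 2 * n))) := by
  set μ : ℝ := ∑ K, W p K * f K with hμdef
  set l : ℝ := t / (c ^ 2 * n) with hl
  have hl0 : 0 ≤ l := div_nonneg ht.le (by positivity)
  have hbd : ∀ i J, |(fun J => l * f J) (update J i true)
      - (fun J => l * f J) (update J i false)| ≤ l * c := by
    intro i J
    simp only
    rw [← mul_sub, abs_mul, abs_of_nonneg hl0]
    exact mul_le_mul_of_nonneg_left (hf i J) hl0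
  have hmgf := mgf_fin hp0 hp1 (l * c) (by positivity) n (fun J => l * f J) hbd
  have hsum : ∑ K, W p K * (l * f K) = l * μ := by
    rw [hμdef, Finset.mul_sum]; exact Finset.sum_congr rfl fun K _ => by ring
  simp only [hsum] at hmgf
  have hmgf2 : ∑ J, W p J * Real.exp (l * f J - l * μ) ≤ Real.exp ((l * c) ^ 2 * ↑n / 2) :=
    hmgf
  calc ∑ J ∈ Finset.univ.filter (fun J => t ≤ f J - μ), W p J
      ≤ ∑ J ∈ Finset.univ.filter (fun J => t ≤ f J - μ),
          W p J * Real.exp (l * f J - l * μ - l * t) := by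
        refine Finset.sum_le_sum fun J hJ => ?_
        have hJ' : t ≤ f J - μ := (Finset.mem_filter.mp hJ).2
        have h0 : (0:ℝ) ≤ l * f J - l * μ - l * t := by nlinarith
        have h1 : (1:ℝ) ≤ Real.exp (l * f J - l * μ - l * t) := Real.one_le_exp h0
        nlinarith [W_nonneg hp0 hp1 J]
    _ ≤ ∑ J, W p J * Real.exp (l * f J - l * μ - l * t) :=
        Finset.sum_le_sum_of_subset_of_nonneg (Finset.filter_subset _ _)
          (fun J _ _ => mul_nonneg (W_nonneg hp0 hp1 J) (Real.exp_pos _).le)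
    _ = ∑ J, Real.exp (-(l * t)) * (W p J * Real.exp (l * f J - l * μ)) :=
        Finset.sum_congr rfl fun J _ => by
          rw [show l * f J - l * μ - l * t = -(l * t) + (l * f J - l * μ) by ring, Real.exp_add]
          ring
    _ = Real.exp (-(l * t)) * ∑ J, W p J * Real.exp (l * f J - l * μ) :=
        (Finset.mul_sum _ _ _).symm
    _ ≤ Real.exp (-(l * t)) * Real.exp ((l * c) ^ 2 * n / 2) := by
        exact mul_le_mul_of_nonneg_left hmgf2 (Real.exp_pos _).le
    _ = Real.exp (-(l * t) + (l * c) ^ 2 * n / 2) := (Real.exp_add _ _).symm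
    _ ≤ Real.exp (-(t ^ 2 / (2 * c ^ 2 * n))) := by
        apply Real.exp_le_exp.mpr
        rcases Nat.eq_zero_or_pos n with hn | hn
        · subst hn
          simp [hl]
        · have hn' : (0:ℝ) < n := by exact_mod_cast hn
          have heq : -(l * t) + (l * c) ^ 2 * n / 2 = -(t ^ 2 / (2 * c ^ 2 * n)) := by
            rw [hl]; field_simp; ring
          rw [heq]

/-- Two-sided concentration over `Fin n`. -/
lemma conc_fin (hp0 : 0 ≤ p) (hp1 : p ≤ 1) {n : ℕ} (c t : ℝ) (hc : 0 < c) (ht : 0 < t)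
    (f : (Fin n → Bool) → ℝ)
    (hf : ∀ i J, |f (update J i true) - f (update J i false)| ≤ c) :
    ∑ J ∈ Finset.univ.filter (fun J => t ≤ |f J - ∑ K, W p K * f K|), W p J ≤
      2 * Real.exp (-(t ^ 2 / (2 * c ^ 2 * n))) := by
  set μ : ℝ := ∑ K, W p K * f K with hμdef
  have hf' : ∀ i J, |(fun J => -f J) (update J i true)
      - (fun J => -f J) (update J i false)| ≤ c := by
    intro i J
    simp only
    rw [show -f (update J i true) - -f (update J i false)
      = -(f (update J i true) - f (update J i false)) by ring, abs_neg]
    exact hf i J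
  have h1 := chernoff_fin hp0 hp1 c t hc ht f hf
  have h2 := chernoff_fin hp0 hp1 c t hc ht (fun J => -f J) hf'
  have hμ2 : ∑ K, W p K * (fun J => -f J) K = -μ := by
    rw [hμdef, ← Finset.sum_neg_distrib]
    exact Finset.sum_congr rfl fun K _ => by ring
  simp only [hμ2] at h2
  set A := Finset.univ.filter (fun J : Fin n → Bool => t ≤ f J - μ) with hA
  set B := Finset.univ.filter (fun J : Fin n → Bool => t ≤ -f J - -μ) with hB
  have hsub : Finset.univ.filter (fun J : Fin n → Bool => t ≤ |f J - μ|) ⊆ A ∪ B := by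
    intro J hJ
    have hJ' : t ≤ |f J - μ| := (Finset.mem_filter.mp hJ).2
    rw [Finset.mem_union, hA, hB, Finset.mem_filter, Finset.mem_filter]
    rcases le_abs.mp hJ' with h | h
    · exact Or.inl ⟨Finset.mem_univ J, h⟩
    · exact Or.inr ⟨Finset.mem_univ J, by linarith⟩
  calc ∑ J ∈ Finset.univ.filter (fun J => t ≤ |f J - μ|), W p J
      ≤ ∑ J ∈ A ∪ B, W p J :=
        Finset.sum_le_sum_of_subset_of_nonneg hsub (fun J _ _ => W_nonneg hp0 hp1 J)
    _ ≤ ∑ J ∈ A, W p J + ∑ J ∈ B, W p J := by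
        have hui := Finset.sum_union_inter (s₁ := A) (s₂ := B) (f := fun J => W p J)
        have hnn : 0 ≤ ∑ J ∈ A ∩ B, W p J :=
          Finset.sum_nonneg fun J _ => W_nonneg hp0 hp1 J
        linarith
    _ ≤ Real.exp (-(t ^ 2 / (2 * c ^ 2 * n))) + Real.exp (-(t ^ 2 / (2 * c ^ 2 * n))) :=
        add_le_add h1 h2
    _ = 2 * Real.exp (-(t ^ 2 / (2 * c ^ 2 * n))) := by ring

/-- Two-sided concentration over an arbitrary finite index type. -/
lemma conc_fintype {ι : Type*} [Fintype ι] [DecidableEq ι] (hp0 : 0 ≤ p) (hp1 : p ≤ 1)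
    (c t : ℝ) (hc : 0 < c) (ht : 0 < t) (f : (ι → Bool) → ℝ)
    (hf : ∀ i J, |f (update J i true) - f (update J i false)| ≤ c) :
    ∑ J ∈ Finset.univ.filter (fun J => t ≤ |f J - ∑ K, W p K * f K|), W p J ≤
      2 * Real.exp (-(t ^ 2 / (2 * c ^ 2 * Fintype.card ι))) := by
  set n := Fintype.card ι with hn
  set e := Fintype.equivFin ι with he
  set F : (Fin n → Bool) → ℝ := fun K => f (K ∘ e) with hF
  have hFbd : ∀ i K, |F (update K i true) - F (update K i false)| ≤ c := by
    intro i K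
    simp only [hF]
    rw [Function.update_comp_equiv K e i true, Function.update_comp_equiv K e i false]
    exact hf (e.symm i) (K ∘ e)
  have htrans : ∀ G : (ι → Bool) → ℝ, ∑ J, G J = ∑ K : Fin n → Bool, G (K ∘ e) := by
    intro G
    refine (Fintype.sum_equiv (Equiv.arrowCongr e.symm (Equiv.refl Bool))
      (fun K => G (K ∘ e)) G fun K => ?_).symm
    refine congrArg G ?_
    funext i
    simp [Equiv.arrowCongr]
  have hW : ∀ K : Fin n → Bool, W p (K ∘ e) = W p K := by
    intro K
    rw [W, W]
    exact Equiv.prod_comp e (fun j => bw p (K j))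
  have hμ : ∑ J, W p J * f J = ∑ K : Fin n → Bool, W p K * F K := by
    rw [htrans (fun J => W p J * f J)]
    exact Finset.sum_congr rfl fun K _ => by rw [hW]
  rw [Finset.sum_filter,
    htrans (fun J => if t ≤ |f J - ∑ K, W p K * f K| then W p J else 0)]
  have hpt : ∀ K : Fin n → Bool,
      (if t ≤ |f (K ∘ e) - ∑ J, W p J * f J| then W p (K ∘ e) else 0)
        = (if t ≤ |F K - ∑ K', W p K' * F K'| then W p K else 0) := by
    intro K
    rw [hμ, hW]
  rw [Finset.sum_congr rfl fun K _ => hpt K, ← Finset.sum_filter]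
  exact conc_fin hp0 hp1 c t hc ht F hFbd

end Conc

section MeasureLemmas

open Conc

variable {p : ℝ}

lemma bern_prob (hp0 : 0 ≤ p) (hp1 : p ≤ 1) : IsProbabilityMeasure (bern p) := by
  constructor
  rw [bern, Measure.add_apply]
  simp only [Measure.smul_apply, measure_univ, ENNReal.smul_def, smul_eq_mul, mul_one]
  show ENNReal.ofReal p + ENNReal.ofReal (1 - p) = 1
  rw [← ENNReal.ofReal_add hp0 (by linarith)]
  norm_num

lemma bern_singleton (b : Bool) : bern p {b} = ENNReal.ofReal (bw p b) := by
  cases b <;>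
    simp [bern, bw, Measure.dirac_apply, ENNReal.smul_def, ENNReal.ofReal, smul_eq_mul, -Measure.coe_nnreal_smul]

lemma PJ_singleton {N : ℕ} (hp0 : 0 ≤ p) (hp1 : p ≤ 1) (J : Couplings N) :
    PJ N p {J} = ENNReal.ofReal (W p J) := by
  rw [PJ, ← Set.univ_pi_singleton, Measure.pi_pi,
    show (∏ i : CIdx N, bern p {J i}) = ∏ i : CIdx N, ENNReal.ofReal (bw p (J i)) from
      Finset.prod_congr rfl fun e _ => bern_singleton (J e),
    ← ENNReal.ofReal_prod_of_nonneg (fun i _ => bw_nonneg hp0 hp1 (J i)), W]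

lemma PJ_apply {N : ℕ} (hp0 : 0 ≤ p) (hp1 : p ≤ 1) (s : Set (Couplings N)) :
    (PJ N p s).toReal = ∑ J ∈ Finset.univ.filter (· ∈ s), W p J := by
  have hs : s = ⋃ J ∈ Finset.univ.filter (· ∈ s), ({J} : Set (Couplings N)) := by
    ext J; simp
  have h2 : PJ N p s = ∑ J ∈ Finset.univ.filter (· ∈ s), PJ N p {J} := by
    conv_lhs => rw [hs]
    refine measure_biUnion_finset ?_ fun b _ => measurableSet_singleton b
    intro a _ b hb hab
    simp only [Set.disjoint_singleton_left, Set.mem_singleton_iff]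
    exact hab
  rw [h2, Finset.sum_congr rfl (fun J _ => PJ_singleton hp0 hp1 J), ENNReal.toReal_sum
    (fun J _ => ENNReal.ofReal_ne_top)]
  exact Finset.sum_congr rfl fun J _ => ENNReal.toReal_ofReal (W_nonneg hp0 hp1 J)

lemma integral_PJ {N : ℕ} (hp0 : 0 ≤ p) (hp1 : p ≤ 1) (f : Couplings N → ℝ) :
    ∫ J, f J ∂(PJ N p) = ∑ J, W p J * f J := by
  haveI : ∀ e : CIdx N, IsProbabilityMeasure (bern p) := fun _ => bern_prob hp0 hp1
  haveI : IsProbabilityMeasure (PJ N p) := by rw [PJ]; infer_instance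
  rw [MeasureTheory.integral_fintype .of_finite]
  exact Finset.sum_congr rfl fun J _ => by
    rw [measureReal_def, PJ_singleton hp0 hp1, ENNReal.toReal_ofReal (W_nonneg hp0 hp1 J), smul_eq_mul]

end MeasureLemmas

section ZgLemmas

lemma spin_abs (b : Bool) : |spin b| = 1 := by cases b <;> simp [spin]

lemma level_nonempty {N : ℕ} {m : ℝ} (hm : m ∈ GammaF N) : ∃ σ, σ ∈ level N m := by
  rw [GammaF, Finset.mem_image] at hm
  obtain ⟨σ, -, hσ⟩ := hm
  exact ⟨σ, by simp [level, hσ]⟩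

lemma Zg_pos {N : ℕ} {p β : ℝ} {g : ℝ → ℝ} (hg0 : ∀ m ∈ GammaF N, 0 ≤ g m)
    (hgne : ∃ m ∈ GammaF N, g m ≠ 0) (J : Couplings N) : 0 < Zg N p β g J := by
  rw [Zg]
  obtain ⟨m₀, hm₀, hne⟩ := hgne
  apply Finset.sum_pos'
  · intro m hm
    exact mul_nonneg (hg0 m hm) (Finset.sum_nonneg fun σ _ => (Real.exp_pos _).le)
  · refine ⟨m₀, hm₀, ?_⟩
    have hg : 0 < g m₀ := (hg0 m₀ hm₀).lt_of_ne (Ne.symm hne)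
    obtain ⟨σ, hσ⟩ := level_nonempty hm₀
    exact mul_pos hg (Finset.sum_pos (fun σ _ => Real.exp_pos _) ⟨σ, hσ⟩)

lemma delta_diff {N : ℕ} {p : ℝ} (e : CIdx N) (J : Couplings N) (σ : Conf N) :
    Delta N p (Function.update J e true) σ - Delta N p (Function.update J e false) σ
      = -((N : ℝ) * p)⁻¹ * (spin (σ e.1.1) * spin (σ e.1.2)) := by
  rw [Delta, Delta, ← mul_sub, ← Finset.sum_sub_distrib]
  congr 1
  rw [Finset.sum_eq_single e]
  · simp [Jval, Function.update_self]
    ring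
  · intro e' _ hne
    simp [Jval, Function.update_of_ne hne]
  · intro h
    exact absurd (Finset.mem_univ e) h

lemma Zg_ratio {N : ℕ} {p β c : ℝ} {g : ℝ → ℝ} (hg0 : ∀ m ∈ GammaF N, 0 ≤ g m)
    (J₁ J₂ : Couplings N)
    (h : ∀ σ : Conf N, -β * Delta N p J₁ σ ≤ c + -β * Delta N p J₂ σ) :
    Zg N p β g J₁ ≤ Real.exp c * Zg N p β g J₂ := by
  rw [Zg, Zg, Finset.mul_sum]
  refine Finset.sum_le_sum fun m hm => ?_
  rw [mul_left_comm]
  refine mul_le_mul_of_nonneg_left ?_ (hg0 m hm)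
  rw [Finset.mul_sum]
  refine Finset.sum_le_sum fun σ _ => ?_
  rw [← Real.exp_add]
  exact Real.exp_le_exp.mpr (h σ)

end ZgLemmas

/-- sub-Gaussian concentration of `N(F_{N,g} - p_{N,g})`. -/
theorem concentration_Fg :
    ∃ c₁ c₂ : ℝ, 0 < c₁ ∧ 0 < c₂ ∧
    ∀ (N : ℕ) (p β : ℝ), 0 < p → p < 1 → 0 < β →
    ∀ g : ℝ → ℝ, (∀ m ∈ GammaF N, 0 ≤ g m) → (∃ m ∈ GammaF N, g m ≠ 0) →
    ∀ t : ℝ, 0 < t →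
      (PJ N p {J : Couplings N | t ≤ |(N : ℝ) * (Fg N p β g J - pg N p β g)|}).toReal ≤
        c₁ * Real.exp (-(2 * c₂ * p ^ 2 * t ^ 2 / β ^ 2)) := by
  refine ⟨2, 1/4, by norm_num, by norm_num, ?_⟩
  intro N p β hp hp1 hβ g hg0 hgne t ht
  rcases Nat.eq_zero_or_pos N with hN | hN
  · subst hN
    have hempty : {J : Couplings 0 | t ≤ |(0 : ℕ) * (Fg 0 p β g J - pg 0 p β g)|} = ∅ := by
      ext J
      simp only [Set.mem_setOf_eq, Set.mem_empty_iff_false, iff_false, not_le,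
        Nat.cast_zero, zero_mul, abs_zero]
      exact ht
    rw [show {J : Couplings 0 | t ≤ |((0:ℕ) : ℝ) * (Fg 0 p β g J - pg 0 p β g)|} = ∅ by
      ext J; simp [ht, not_le]]
    simp only [measure_empty, ENNReal.toReal_zero]
    positivity
  · have hN0 : (0:ℝ) < N := by exact_mod_cast hN
    set c : ℝ := β / (N * p) with hc
    have hcpos : 0 < c := by rw [hc]; positivity
    set f : Couplings N → ℝ := fun J => Real.log (Zg N p β g J) with hf
    -- bounded differences
    have hbd : ∀ (e : CIdx N) (J : Couplings N),
        |f (Function.update J e true) - f (Function.update J e false)| ≤ c := by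
      intro e J
      set J₁ := Function.update J e true with hJ₁
      set J₂ := Function.update J e false with hJ₂
      have hkey : ∀ σ : Conf N, -β * Delta N p J₁ σ - -β * Delta N p J₂ σ
          = β * ((N : ℝ) * p)⁻¹ * (spin (σ e.1.1) * spin (σ e.1.2)) := by
        intro σ
        rw [show -β * Delta N p J₁ σ - -β * Delta N p J₂ σ
          = -β * (Delta N p J₁ σ - Delta N p J₂ σ) by ring, hJ₁, hJ₂, delta_diff]
        ring
      have habs : ∀ σ : Conf N, |(-β * Delta N p J₁ σ) - (-β * Delta N p J₂ σ)| ≤ c := by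
        intro σ
        have hss : |spin (σ e.1.1) * spin (σ e.1.2)| = 1 := by
          rw [abs_mul, spin_abs, spin_abs, mul_one]
        rw [hkey σ, abs_mul, hss, mul_one, abs_mul, abs_of_nonneg hβ.le,
          abs_of_nonneg (by positivity : (0:ℝ) ≤ ((N:ℝ) * p)⁻¹), hc, div_eq_mul_inv]
      have h12 : ∀ σ : Conf N, -β * Delta N p J₁ σ ≤ c + -β * Delta N p J₂ σ := by
        intro σ
        have := (abs_le.mp (habs σ)).2
        linarith
      have h21 : ∀ σ : Conf N, -β * Delta N p J₂ σ ≤ c + -β * Delta N p J₁ σ := by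
        intro σ
        have := (abs_le.mp (habs σ)).1
        linarith
      have hZ1 : 0 < Zg N p β g J₁ := Zg_pos hg0 hgne J₁
      have hZ2 : 0 < Zg N p β g J₂ := Zg_pos hg0 hgne J₂
      have l1 : Real.log (Zg N p β g J₁) ≤ c + Real.log (Zg N p β g J₂) := by
        have := Real.log_le_log hZ1 (Zg_ratio hg0 J₁ J₂ h12)
        rwa [Real.log_mul (Real.exp_ne_zero c) hZ2.ne', Real.log_exp] at this
      have l2 : Real.log (Zg N p β g J₂) ≤ c + Real.log (Zg N p β g J₁) := by
        have := Real.log_le_log hZ2 (Zg_ratio hg0 J₂ J₁ h21)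
        rwa [Real.log_mul (Real.exp_ne_zero c) hZ1.ne', Real.log_exp] at this
      rw [hf]
      exact abs_le.mpr ⟨by linarith, by linarith⟩
    -- identify the mean
    have hpg : pg N p β g = ∑ J, Conc.W p J * Fg N p β g J := by
      rw [pg]; exact integral_PJ hp.le hp1.le _
    have hNFg : ∀ J : Couplings N, (N : ℝ) * Fg N p β g J = f J := by
      intro J
      rw [Fg, hf]
      field_simp
    have hμN : (∑ K, Conc.W p K * f K) = (N : ℝ) * pg N p β g := by
      rw [hpg, Finset.mul_sum]
      refine Finset.sum_congr rfl fun K _ => ?_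
      rw [← hNFg K]
      ring
    have hev : ∀ J : Couplings N,
        (N : ℝ) * (Fg N p β g J - pg N p β g) = f J - ∑ K, Conc.W p K * f K := by
      intro J
      rw [hμN, mul_sub, hNFg J]
    rw [show {J : Couplings N | t ≤ |(N : ℝ) * (Fg N p β g J - pg N p β g)|}
        = {J : Couplings N | t ≤ |f J - ∑ K, Conc.W p K * f K|} from
      Set.ext fun J => by rw [Set.mem_setOf_eq, Set.mem_setOf_eq, hev J]]
    rw [PJ_apply hp.le hp1.le]
    have hfilter : (Finset.univ.filter
          (· ∈ {J : Couplings N | t ≤ |f J - ∑ K, Conc.W p K * f K|}))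
        = Finset.univ.filter (fun J => t ≤ |f J - ∑ K, Conc.W p K * f K|) := by
      apply Finset.filter_congr
      intro J _
      simp [Set.mem_setOf_eq]
    rw [hfilter]
    rcases Nat.eq_zero_or_pos (Fintype.card (CIdx N)) with hcard | hcard
    · -- no couplings at all: the deviation is zero
      haveI : IsEmpty (CIdx N) := Fintype.card_eq_zero_iff.mp hcard
      have huniq : ∀ J K : Couplings N, J = K := fun J K => funext fun e => isEmptyElim e
      have hW1 : ∀ J : Couplings N, Conc.W p J = 1 := fun J => by
        rw [Conc.W]; simp
      have hempty : Finset.univ.filter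
          (fun J : Couplings N => t ≤ |f J - ∑ K, Conc.W p K * f K|) = ∅ := by
        rw [Finset.filter_eq_empty_iff]
        intro J _
        have hsum : ∑ K : Couplings N, Conc.W p K * f K = f J := by
          rw [Finset.sum_eq_single_of_mem J (Finset.mem_univ J)
            (fun K _ hK => absurd (huniq K J) hK), hW1, one_mul]
        rw [hsum, sub_self, abs_zero]
        exact not_le.mpr ht
      rw [hempty, Finset.sum_empty]
      positivity
    · have hcard' : (0:ℝ) < Fintype.card (CIdx N) := by exact_mod_cast hcard
      refine le_trans (Conc.conc_fintype hp.le hp1.le c t hcpos ht f hbd) ?_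
      have hcardle : (Fintype.card (CIdx N) : ℝ) ≤ (N : ℝ) ^ 2 := by
        have h1 : Fintype.card (CIdx N) ≤ Fintype.card (Fin N × Fin N) :=
          Fintype.card_subtype_le _
        have h2 : Fintype.card (Fin N × Fin N) = N * N := by
          simp [Fintype.card_prod]
        rw [h2] at h1
        have : (Fintype.card (CIdx N) : ℝ) ≤ (N * N : ℕ) := by exact_mod_cast h1
        calc (Fintype.card (CIdx N) : ℝ) ≤ ((N * N : ℕ) : ℝ) := this
          _ = (N : ℝ) ^ 2 := by push_cast; ring
      have hdenom : 2 * c ^ 2 * (Fintype.card (CIdx N) : ℝ) ≤ 2 * β ^ 2 / p ^ 2 := by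
        rw [hc, div_pow, show ((N:ℝ) * p) ^ 2 = (N:ℝ) ^ 2 * p ^ 2 by ring,
          show 2 * (β ^ 2 / ((N:ℝ) ^ 2 * p ^ 2)) * (Fintype.card (CIdx N) : ℝ)
            = (2 * β ^ 2 * (Fintype.card (CIdx N) : ℝ)) / ((N:ℝ) ^ 2 * p ^ 2) by ring,
          div_le_div_iff₀ (by positivity) (by positivity : (0:ℝ) < p ^ 2)]
        nlinarith [mul_le_mul_of_nonneg_left hcardle
          (by positivity : (0:ℝ) ≤ 2 * β ^ 2 * p ^ 2)]
      have hkey : t ^ 2 * p ^ 2 / (2 * β ^ 2) ≤ t ^ 2 / (2 * c ^ 2 * Fintype.card (CIdx N)) := by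
        have h1 : (0:ℝ) < 2 * c ^ 2 * Fintype.card (CIdx N) := by positivity
        have h2 : (0:ℝ) < 2 * β ^ 2 / p ^ 2 := by positivity
        calc t ^ 2 * p ^ 2 / (2 * β ^ 2) = t ^ 2 / (2 * β ^ 2 / p ^ 2) := by
              field_simp
          _ ≤ t ^ 2 / (2 * c ^ 2 * Fintype.card (CIdx N)) := by
              apply div_le_div_of_nonneg_left (by positivity) h1 hdenom
      calc 2 * Real.exp (-(t ^ 2 / (2 * c ^ 2 * Fintype.card (CIdx N))))
          ≤ 2 * Real.exp (-(t ^ 2 * p ^ 2 / (2 * β ^ 2))) := by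
            have := Real.exp_le_exp.mpr (neg_le_neg hkey)
            linarith
        _ = 2 * Real.exp (-(2 * (1/4) * p ^ 2 * t ^ 2 / β ^ 2)) := by
            congr 1
            ring

end RDCW
end
end

section
/- There is a sequence ε_N→0 such that for every N and every g:Γ_N→[0,∞), 𝔼[ Z_{N,g}² ] ≤ e^{2α}·(𝔼[Z_{N,g}])²·(1+ε_N), where α=β²(1−p)/(4p). -/
open MeasureTheory Filter Finset
open scoped Classical ENNReal NNReal Topology

noncomputable section

namespace RDCW

/-! ### Auxiliary material for the second moment bound -/

/-- The moment generating function `𝔼[e^{c(J-p)}]` of a centred Bernoulli(p) variable. -/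
def phiMGF (p c : ℝ) : ℝ :=
  p * Real.exp (c * (1 - p)) + (1 - p) * Real.exp (c * (0 - p))

lemma aux_bern_apply {p : ℝ} (h0 : 0 ≤ p) (h1 : p ≤ 1) (b : Bool) :
    bern p {b} = ENNReal.ofReal (if b then p else 1 - p) := by
  have hq : (0:ℝ) ≤ 1 - p := by linarith
  cases b <;>
    simp [bern, Measure.add_apply, Measure.smul_apply, Measure.dirac_apply,
      ENNReal.smul_def, ENNReal.ofReal, h0, hq, -Measure.coe_nnreal_smul]

lemma aux_bern_prob {p : ℝ} (h0 : 0 ≤ p) (h1 : p ≤ 1) :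
    IsProbabilityMeasure (bern p) := by
  constructor
  have hq : (0:ℝ) ≤ 1 - p := by linarith
  have : (Set.univ : Set Bool) = {true} ∪ {false} := by
    ext b; cases b <;> simp
  rw [this, measure_union (by simp) (measurableSet_singleton _),
    aux_bern_apply h0 h1, aux_bern_apply h0 h1]
  have : (if (true : Bool) then p else 1 - p) = p := by simp
  rw [this]
  have : (if (false : Bool) then p else 1 - p) = 1 - p := by simp
  rw [this]
  rw [← ENNReal.ofReal_add h0 hq]
  norm_num

lemma aux_bern_integral {p : ℝ} (h0 : 0 ≤ p) (h1 : p ≤ 1) (f : Bool → ℝ) :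
    ∫ b, f b ∂bern p = p * f true + (1 - p) * f false := by
  have hq : (0:ℝ) ≤ 1 - p := by linarith
  rw [integral_fintype (hf := Integrable.of_finite)]
  simp [Fintype.sum_bool, measureReal_def, aux_bern_apply h0 h1, ENNReal.toReal_ofReal, h0, hq, mul_comm]

lemma aux_phi_integral {p : ℝ} (h0 : 0 ≤ p) (h1 : p ≤ 1) (c : ℝ) :
    ∫ b, Real.exp (c * ((if b then (1:ℝ) else 0) - p)) ∂bern p = phiMGF p c := by
  rw [aux_bern_integral h0 h1]
  unfold phiMGF
  norm_num

lemma aux_one_le_phi {p : ℝ} (h0 : 0 ≤ p) (h1 : p ≤ 1) (c : ℝ) :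
    1 ≤ phiMGF p c := by
  have hq : (0:ℝ) ≤ 1 - p := by linarith
  have h₁ := Real.add_one_le_exp (c * (1 - p))
  have h₂ := Real.add_one_le_exp (c * (0 - p))
  have e₁ : p * (c * (1 - p) + 1) ≤ p * Real.exp (c * (1 - p)) :=
    mul_le_mul_of_nonneg_left h₁ h0
  have e₂ : (1 - p) * (c * (0 - p) + 1) ≤ (1 - p) * Real.exp (c * (0 - p)) :=
    mul_le_mul_of_nonneg_left h₂ hq
  unfold phiMGF
  nlinarith [e₁, e₂]

lemma aux_phi_pos {p : ℝ} (h0 : 0 ≤ p) (h1 : p ≤ 1) (c : ℝ) :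
    0 ≤ phiMGF p c := le_trans zero_le_one (aux_one_le_phi h0 h1 c)

/-- The algebraic identity `φ(2c) = φ(c)² + p(1-p)(e^{c(1-p)} - e^{-cp})²`. -/
lemma aux_phi_sq {p : ℝ} (c : ℝ) :
    phiMGF p (c + c) = phiMGF p c ^ 2
      + p * (1 - p) * (Real.exp (c * (1 - p)) - Real.exp (c * (0 - p))) ^ 2 := by
  unfold phiMGF
  rw [show (c + c) * (1 - p) = c * (1 - p) + c * (1 - p) by ring, Real.exp_add,
    show (c + c) * (0 - p) = c * (0 - p) + c * (0 - p) by ring, Real.exp_add]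
  ring

lemma aux_exp_sub_one_sq {a : ℝ} (ha : 0 ≤ a) :
    (Real.exp a - 1) ^ 2 ≤ a ^ 2 * Real.exp (2 * a) := by
  have h1 : Real.exp a - 1 ≤ a * Real.exp a := by
    have := Real.add_one_le_exp (-a)
    have hea : (0:ℝ) < Real.exp a := Real.exp_pos a
    have : (-a + 1) * Real.exp a ≤ Real.exp (-a) * Real.exp a :=
      mul_le_mul_of_nonneg_right this hea.le
    rw [← Real.exp_add] at this
    simp at this
    nlinarith
  have h0 : 0 ≤ Real.exp a - 1 := by
    have := Real.add_one_le_exp (0:ℝ)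
    have := Real.exp_le_exp.mpr ha
    simp [Real.exp_zero] at this ⊢
    linarith
  have h2 : (Real.exp a - 1) ^ 2 ≤ (a * Real.exp a) ^ 2 := by
    apply sq_le_sq' <;> nlinarith
  calc (Real.exp a - 1) ^ 2 ≤ (a * Real.exp a) ^ 2 := h2
    _ = a ^ 2 * Real.exp (2 * a) := by
        rw [mul_pow, sq (Real.exp a), ← Real.exp_add]; ring_nf

lemma aux_exp_neg_sub_one_sq {a : ℝ} (ha : 0 ≤ a) :
    (Real.exp (-a) - 1) ^ 2 ≤ a ^ 2 := by
  have h1 : -a + 1 ≤ Real.exp (-a) := Real.add_one_le_exp (-a)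
  have h2 : Real.exp (-a) ≤ 1 := by
    rw [show (1:ℝ) = Real.exp 0 by simp]
    exact Real.exp_le_exp.mpr (by linarith)
  apply sq_le_sq' <;> nlinarith

/-- The difference term is at most `a² e^{4a}` for `c = ±a`. -/
lemma aux_diff_sq {p : ℝ} (h0 : 0 ≤ p) (h1 : p ≤ 1) {a : ℝ} (ha : 0 ≤ a)
    {c : ℝ} (hc : c = a ∨ c = -a) :
    (Real.exp (c * (1 - p)) - Real.exp (c * (0 - p))) ^ 2 ≤ a ^ 2 * Real.exp (4 * a) := by
  have key : ∀ d : ℝ, Real.exp (d * (1 - p)) - Real.exp (d * (0 - p))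
      = Real.exp (d * (0 - p)) * (Real.exp d - 1) := by
    intro d
    rw [show d * (1 - p) = d * (0 - p) + d by ring, Real.exp_add]
    ring
  have sqexp : ∀ x : ℝ, Real.exp x ^ 2 = Real.exp (x + x) := by
    intro x; rw [Real.exp_add, sq]
  rcases hc with h | h
  · rw [h, key, mul_pow, sqexp]
    have hb1 : Real.exp (a * (0 - p) + a * (0 - p)) ≤ Real.exp (2 * a) := by
      apply Real.exp_le_exp.mpr; nlinarith
    have hb2 : (Real.exp a - 1) ^ 2 ≤ a ^ 2 * Real.exp (2 * a) := aux_exp_sub_one_sq ha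
    calc Real.exp (a * (0 - p) + a * (0 - p)) * (Real.exp a - 1) ^ 2
        ≤ Real.exp (2 * a) * (a ^ 2 * Real.exp (2 * a)) :=
          mul_le_mul hb1 hb2 (sq_nonneg _) (Real.exp_pos _).le
      _ = a ^ 2 * Real.exp (4 * a) := by
          rw [mul_comm (Real.exp (2*a)), mul_assoc, ← Real.exp_add,
            show (2:ℝ) * a + 2 * a = 4 * a by ring]
  · rw [h, key, mul_pow, sqexp]
    have hb1 : Real.exp (-a * (0 - p) + -a * (0 - p)) ≤ Real.exp (2 * a) := by
      apply Real.exp_le_exp.mpr; nlinarith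
    have hb2 : (Real.exp (-a) - 1) ^ 2 ≤ a ^ 2 := aux_exp_neg_sub_one_sq ha
    calc Real.exp (-a * (0 - p) + -a * (0 - p)) * (Real.exp (-a) - 1) ^ 2
        ≤ Real.exp (2 * a) * a ^ 2 :=
          mul_le_mul hb1 hb2 (sq_nonneg _) (Real.exp_pos _).le
      _ ≤ a ^ 2 * Real.exp (4 * a) := by
          rw [mul_comm]
          apply mul_le_mul_of_nonneg_left _ (sq_nonneg a)
          apply Real.exp_le_exp.mpr; linarith

/-- Per-edge comparison: `φ(c+c') ≤ K φ(c) φ(c')` for `c, c' ∈ {a, -a}`. -/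
lemma aux_phi_edge {p : ℝ} (h0 : 0 ≤ p) (h1 : p ≤ 1) {a : ℝ} (ha : 0 ≤ a)
    {c c' : ℝ} (hc : c = a ∨ c = -a) (hc' : c' = a ∨ c' = -a) :
    phiMGF p (c + c') ≤
      Real.exp (p * (1 - p) * a ^ 2 * Real.exp (4 * a)) * (phiMGF p c * phiMGF p c') := by
  set K := Real.exp (p * (1 - p) * a ^ 2 * Real.exp (4 * a)) with hK
  have hKnn : (0:ℝ) ≤ p * (1 - p) * a ^ 2 * Real.exp (4 * a) := by
    have h' : (0:ℝ) ≤ p * (1 - p) := mul_nonneg h0 (by linarith)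
    exact mul_nonneg (mul_nonneg h' (sq_nonneg a)) (Real.exp_pos _).le
  have hK1 : 1 ≤ K := by
    rw [hK]
    have := Real.add_one_le_exp (p * (1 - p) * a ^ 2 * Real.exp (4 * a))
    linarith
  have hphi := aux_one_le_phi h0 h1
  by_cases hcc : c' = c
  · subst hcc
    have hid := aux_phi_sq (p := p) (c := c')
    have hdiff := aux_diff_sq h0 h1 ha hc'
    have hpq : (0:ℝ) ≤ p * (1 - p) := mul_nonneg h0 (by linarith)
    have step1 : phiMGF p (c' + c') ≤ phiMGF p c' ^ 2 + p * (1 - p) * (a ^ 2 * Real.exp (4 * a)) := by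
      rw [hid]
      have := mul_le_mul_of_nonneg_left hdiff hpq
      linarith
    have h2 : (1:ℝ) ≤ phiMGF p c' ^ 2 := by nlinarith [hphi c']
    have step2 : phiMGF p c' ^ 2 + p * (1 - p) * (a ^ 2 * Real.exp (4 * a))
        ≤ phiMGF p c' ^ 2 * (1 + p * (1 - p) * (a ^ 2 * Real.exp (4 * a))) := by
      have hnn : (0:ℝ) ≤ p * (1 - p) * (a ^ 2 * Real.exp (4 * a)) := by positivity
      nlinarith
    have step3 : (1:ℝ) + p * (1 - p) * (a ^ 2 * Real.exp (4 * a)) ≤ K := by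
      rw [hK]
      have := Real.add_one_le_exp (p * (1 - p) * a ^ 2 * Real.exp (4 * a))
      linarith
    calc phiMGF p (c' + c') ≤ phiMGF p c' ^ 2 * (1 + p * (1 - p) * (a ^ 2 * Real.exp (4 * a))) :=
          le_trans step1 step2
      _ ≤ phiMGF p c' ^ 2 * K := by
          apply mul_le_mul_of_nonneg_left step3 (by positivity)
      _ = K * (phiMGF p c' * phiMGF p c') := by ring
  · have hzero : c + c' = 0 := by
      rcases hc with rfl | rfl <;> rcases hc' with rfl | rfl
      · exact absurd rfl hcc
      · ring
      · ring
      · exact absurd rfl hcc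
    rw [hzero]
    have hphi0 : phiMGF p 0 = 1 := by unfold phiMGF; simp
    rw [hphi0]
    have hm : (1:ℝ) * 1 ≤ phiMGF p c * phiMGF p c' :=
      mul_le_mul (hphi c) (hphi c') zero_le_one (aux_phi_pos h0 h1 c)
    have hm' : (1:ℝ) ≤ phiMGF p c * phiMGF p c' := by linarith
    have := mul_le_mul hK1 hm' zero_le_one (le_trans zero_le_one hK1)
    linarith

/-- Factorisation of integrals of products over the product coupling measure. -/
lemma aux_pj_factor {p : ℝ} (h0 : 0 ≤ p) (h1 : p ≤ 1) (N : ℕ) (f : CIdx N → Bool → ℝ) :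
    ∫ J, ∏ e, f e (J e) ∂PJ N p = ∏ e, ∫ b, f e b ∂bern p := by
  letI : MeasureSpace Bool := { volume := bern p }
  haveI : SigmaFinite (volume : Measure Bool) := inferInstanceAs (SigmaFinite (bern p))
  have h : PJ N p = (volume : Measure (Couplings N)) := by
    rw [volume_pi]; rfl
  rw [h]
  exact MeasureTheory.integral_fintype_prod_eq_prod f

/-- The number of coupling indices is at most `N²/2`. -/
lemma aux_card_cidx (N : ℕ) : 2 * Fintype.card (CIdx N) ≤ N ^ 2 := by
  classical
  rw [Fintype.card_subtype]
  set S := Finset.univ.filter (fun ij : Fin N × Fin N => ij.1 < ij.2) with hS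
  set T := Finset.univ.filter (fun ij : Fin N × Fin N => ij.2 < ij.1) with hT
  have hcard : S.card = T.card := by
    apply Finset.card_bij (fun ij _ => Prod.swap ij)
    · intro ij hij
      simp only [hS, hT, Finset.mem_filter, Finset.mem_univ, true_and] at hij ⊢
      exact hij
    · intro a ha b hb hab
      exact Prod.swap_injective hab
    · intro b hb
      refine ⟨Prod.swap b, ?_, by simp⟩
      simp only [hS, hT, Finset.mem_filter, Finset.mem_univ, true_and] at hb ⊢
      exact hb
  have hdisj : Disjoint S T := by
    rw [Finset.disjoint_left]
    intro ij hij hij'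
    simp only [hS, hT, Finset.mem_filter, Finset.mem_univ, true_and] at hij hij'
    exact absurd hij' (not_lt_of_gt hij)
  have hunion : (S ∪ T).card ≤ (Finset.univ : Finset (Fin N × Fin N)).card :=
    Finset.card_le_card (Finset.subset_univ _)
  rw [Finset.card_union_of_disjoint hdisj] at hunion
  simp only [Finset.card_univ, Fintype.card_prod, Fintype.card_fin] at hunion
  rw [pow_two]
  omega

/-- second moment bound for `𝒵_{N,g}`. -/
theorem Zg_second_moment (p β : ℝ) (hp : 0 < p) (hp1 : p < 1) (hβ : 0 < β) :
    ∃ ε : ℕ → ℝ, Tendsto ε atTop (𝓝 0) ∧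
    ∀ (N : ℕ) (g : ℝ → ℝ), (∀ m ∈ GammaF N, 0 ≤ g m) →
      ∫ J, (Zg N p β g J) ^ 2 ∂PJ N p ≤
        Real.exp (2 * alphaC β p) * (∫ J, Zg N p β g J ∂PJ N p) ^ 2 * (1 + ε N) := by
  have h0 : (0:ℝ) ≤ p := hp.le
  have h1 : p ≤ 1 := hp1.le
  have hα : 0 ≤ alphaC β p := by
    unfold alphaC
    have : (0:ℝ) ≤ 1 - p := by linarith
    positivity
  refine ⟨fun n => Real.exp (2 * alphaC β p *
      (Real.exp (4 * (β * ((n:ℝ) * p)⁻¹)) - 1)) - 1, ?_, ?_⟩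
  · -- the error sequence tends to zero
    have h1' : Tendsto (fun n : ℕ => (n:ℝ) * p) atTop atTop :=
      tendsto_natCast_atTop_atTop.atTop_mul_const hp
    have h2' : Tendsto (fun n : ℕ => β * ((n:ℝ) * p)⁻¹) atTop (𝓝 0) := by
      have h3' := h1'.inv_tendsto_atTop
      have h4' := h3'.const_mul β
      simpa using h4'
    have hcont : ContinuousAt (fun x : ℝ =>
        Real.exp (2 * alphaC β p * (Real.exp (4 * x) - 1)) - 1) 0 := by
      fun_prop
    have h5' := hcont.tendsto.comp h2'
    simpa [Function.comp_def] using h5'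
  · intro N g hg
    haveI hPB : IsProbabilityMeasure (bern p) := aux_bern_prob h0 h1
    haveI : IsProbabilityMeasure (PJ N p) := by unfold PJ; infer_instance
    set a := β * ((N:ℝ) * p)⁻¹ with ha_def
    have ha : 0 ≤ a := by
      rw [ha_def]; positivity
    set K := Real.exp (p * (1 - p) * a ^ 2 * Real.exp (4 * a)) with hK
    set Ec := Fintype.card (CIdx N) with hEc
    -- spin products are ±1
    have hs : ∀ (σ : Conf N) (e : CIdx N),
        a * (spin (σ e.1.1) * spin (σ e.1.2)) = a ∨
        a * (spin (σ e.1.1) * spin (σ e.1.2)) = -a := by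
      intro σ e
      rcases Bool.dichotomy (σ e.1.1) with h | h <;>
        rcases Bool.dichotomy (σ e.1.2) with h' | h' <;>
          simp [spin, h, h']
    -- the exponent as a sum over edges
    have hexp : ∀ (J : Couplings N) (σ : Conf N), -β * Delta N p J σ
        = ∑ e : CIdx N, (a * (spin (σ e.1.1) * spin (σ e.1.2)))
            * ((if J e then (1:ℝ) else 0) - p) := by
      intro J σ
      unfold Delta Jval
      rw [show -β * (-((N:ℝ) * p)⁻¹ * ∑ e : CIdx N,
            ((if J e then (1:ℝ) else 0) - p) * spin (σ e.1.1) * spin (σ e.1.2))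
          = (β * ((N:ℝ) * p)⁻¹) * ∑ e : CIdx N,
            ((if J e then (1:ℝ) else 0) - p) * spin (σ e.1.1) * spin (σ e.1.2)
        from by ring]
      rw [Finset.mul_sum]
      exact Finset.sum_congr rfl fun e _ => by rw [ha_def]; ring
    -- Zg as a single sum over configurations
    have hZ : ∀ J : Couplings N, Zg N p β g J
        = ∑ σ : Conf N, g (mag σ) * ∏ e : CIdx N,
            Real.exp ((a * (spin (σ e.1.1) * spin (σ e.1.2)))
              * ((if J e then (1:ℝ) else 0) - p)) := by
      intro J
      have step : Zg N p β g J
          = ∑ σ : Conf N, g (mag σ) * Real.exp (-β * Delta N p J σ) := by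
        unfold Zg level
        rw [← Finset.sum_fiberwise_of_maps_to (g := mag) (t := GammaF N)
          (fun σ _ => Finset.mem_image_of_mem mag (Finset.mem_univ σ))
          (fun σ => g (mag σ) * Real.exp (-β * Delta N p J σ))]
        refine Finset.sum_congr rfl fun m hm => ?_
        rw [Finset.mul_sum]
        refine Finset.sum_congr rfl fun σ hσ => ?_
        rw [(Finset.mem_filter.mp hσ).2]
      rw [step]
      refine Finset.sum_congr rfl fun σ _ => ?_
      rw [hexp J σ, Real.exp_sum]
    -- first moment
    have hEZ : ∫ J, Zg N p β g J ∂PJ N p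
        = ∑ σ : Conf N, g (mag σ) * ∏ e : CIdx N,
            phiMGF p (a * (spin (σ e.1.1) * spin (σ e.1.2))) := by
      calc ∫ J, Zg N p β g J ∂PJ N p
          = ∫ J, ∑ σ : Conf N, g (mag σ) * ∏ e : CIdx N,
              Real.exp ((a * (spin (σ e.1.1) * spin (σ e.1.2)))
                * ((if J e then (1:ℝ) else 0) - p)) ∂PJ N p := by
            refine integral_congr_ae (Filter.Eventually.of_forall fun J => ?_)
            exact hZ J
        _ = ∑ σ : Conf N, ∫ J, g (mag σ) * ∏ e : CIdx N,
              Real.exp ((a * (spin (σ e.1.1) * spin (σ e.1.2)))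
                * ((if J e then (1:ℝ) else 0) - p)) ∂PJ N p :=
            integral_finset_sum _ fun σ _ => Integrable.of_finite
        _ = ∑ σ : Conf N, g (mag σ) * ∏ e : CIdx N,
              phiMGF p (a * (spin (σ e.1.1) * spin (σ e.1.2))) := by
            refine Finset.sum_congr rfl fun σ _ => ?_
            rw [integral_const_mul, aux_pj_factor h0 h1 N (fun e b =>
              Real.exp ((a * (spin (σ e.1.1) * spin (σ e.1.2)))
                * ((if b then (1:ℝ) else 0) - p)))]
            congr 1
            exact Finset.prod_congr rfl fun e _ => aux_phi_integral h0 h1 _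
    -- second moment
    have hZ2 : ∀ J : Couplings N, Zg N p β g J ^ 2
        = ∑ σp : Conf N × Conf N, (g (mag σp.1) * g (mag σp.2))
            * ∏ e : CIdx N,
              Real.exp ((a * (spin (σp.1 e.1.1) * spin (σp.1 e.1.2))
                  + a * (spin (σp.2 e.1.1) * spin (σp.2 e.1.2)))
                * ((if J e then (1:ℝ) else 0) - p)) := by
      intro J
      rw [sq, hZ J, Fintype.sum_mul_sum, Fintype.sum_prod_type]
      refine Finset.sum_congr rfl fun σ _ => Finset.sum_congr rfl fun σ' _ => ?_
      dsimp only
      rw [mul_mul_mul_comm, ← Finset.prod_mul_distrib]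
      congr 1
      refine Finset.prod_congr rfl fun e _ => ?_
      rw [← Real.exp_add]
      congr 1
      ring
    have hEZ2 : ∫ J, Zg N p β g J ^ 2 ∂PJ N p
        = ∑ σp : Conf N × Conf N, (g (mag σp.1) * g (mag σp.2))
            * ∏ e : CIdx N,
              phiMGF p (a * (spin (σp.1 e.1.1) * spin (σp.1 e.1.2))
                + a * (spin (σp.2 e.1.1) * spin (σp.2 e.1.2))) := by
      calc ∫ J, Zg N p β g J ^ 2 ∂PJ N p
          = ∫ J, ∑ σp : Conf N × Conf N, (g (mag σp.1) * g (mag σp.2))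
              * ∏ e : CIdx N,
                Real.exp ((a * (spin (σp.1 e.1.1) * spin (σp.1 e.1.2))
                    + a * (spin (σp.2 e.1.1) * spin (σp.2 e.1.2)))
                  * ((if J e then (1:ℝ) else 0) - p)) ∂PJ N p := by
            refine integral_congr_ae (Filter.Eventually.of_forall fun J => ?_)
            exact hZ2 J
        _ = ∑ σp : Conf N × Conf N, ∫ J, (g (mag σp.1) * g (mag σp.2))
              * ∏ e : CIdx N,
                Real.exp ((a * (spin (σp.1 e.1.1) * spin (σp.1 e.1.2))
                    + a * (spin (σp.2 e.1.1) * spin (σp.2 e.1.2)))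
                  * ((if J e then (1:ℝ) else 0) - p)) ∂PJ N p :=
            integral_finset_sum _ fun σp _ => Integrable.of_finite
        _ = _ := by
            refine Finset.sum_congr rfl fun σp _ => ?_
            rw [integral_const_mul, aux_pj_factor h0 h1 N (fun e b =>
              Real.exp ((a * (spin (σp.1 e.1.1) * spin (σp.1 e.1.2))
                  + a * (spin (σp.2 e.1.1) * spin (σp.2 e.1.2)))
                * ((if b then (1:ℝ) else 0) - p)))]
            congr 1
            exact Finset.prod_congr rfl fun e _ => aux_phi_integral h0 h1 _
    -- nonnegativity
    have hw : ∀ σ : Conf N, 0 ≤ g (mag σ) := fun σ =>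
      hg _ (Finset.mem_image_of_mem mag (Finset.mem_univ σ))
    have hPnn : ∀ σ : Conf N, 0 ≤ ∏ e : CIdx N,
        phiMGF p (a * (spin (σ e.1.1) * spin (σ e.1.2))) := fun σ =>
      Finset.prod_nonneg fun e _ => aux_phi_pos h0 h1 _
    -- per-pair product bound
    have hprod : ∀ σp : Conf N × Conf N,
        (∏ e : CIdx N, phiMGF p (a * (spin (σp.1 e.1.1) * spin (σp.1 e.1.2))
            + a * (spin (σp.2 e.1.1) * spin (σp.2 e.1.2))))
        ≤ K ^ Ec * ((∏ e : CIdx N, phiMGF p (a * (spin (σp.1 e.1.1) * spin (σp.1 e.1.2))))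
            * ∏ e : CIdx N, phiMGF p (a * (spin (σp.2 e.1.1) * spin (σp.2 e.1.2)))) := by
      intro σp
      calc (∏ e : CIdx N, phiMGF p (a * (spin (σp.1 e.1.1) * spin (σp.1 e.1.2))
              + a * (spin (σp.2 e.1.1) * spin (σp.2 e.1.2))))
          ≤ ∏ e : CIdx N, K * (phiMGF p (a * (spin (σp.1 e.1.1) * spin (σp.1 e.1.2)))
              * phiMGF p (a * (spin (σp.2 e.1.1) * spin (σp.2 e.1.2)))) :=
            Finset.prod_le_prod (fun e _ => aux_phi_pos h0 h1 _)
              (fun e _ => aux_phi_edge h0 h1 ha (hs σp.1 e) (hs σp.2 e))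
        _ = K ^ Ec * ((∏ e : CIdx N, phiMGF p (a * (spin (σp.1 e.1.1) * spin (σp.1 e.1.2))))
              * ∏ e : CIdx N, phiMGF p (a * (spin (σp.2 e.1.1) * spin (σp.2 e.1.2)))) := by
            rw [Finset.prod_mul_distrib, Finset.prod_const, Finset.prod_mul_distrib,
              Finset.card_univ, hEc]
    -- bound on K ^ Ec
    have hE2 : (2:ℝ) * (Ec:ℝ) ≤ ((N:ℝ)) ^ 2 := by
      rw [hEc]
      exact_mod_cast aux_card_cidx N
    have hKnn2 : (0:ℝ) ≤ p * (1 - p) := mul_nonneg h0 (by linarith)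
    have hexp_bound : (Ec:ℝ) * (p * (1 - p) * a ^ 2) ≤ 2 * alphaC β p := by
      rcases Nat.eq_zero_or_pos N with hN | hN
      · have ha0 : a = 0 := by rw [ha_def, hN]; simp
        rw [ha0]
        simpa using (by linarith : (0:ℝ) ≤ 2 * alphaC β p)
      · have hNpos : (0:ℝ) < (N:ℝ) := by exact_mod_cast hN
        have hNp : (0:ℝ) < (N:ℝ) * p := mul_pos hNpos hp
        have hkey : (Ec:ℝ) * (p * (1 - p) * a ^ 2)
            = ((Ec:ℝ) * β ^ 2 * (1 - p)) / ((N:ℝ) ^ 2 * p) := by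
          rw [ha_def]
          field_simp
        have hrhs : 2 * alphaC β p = (β ^ 2 * (1 - p)) / (2 * p) := by
          unfold alphaC
          field_simp
          ring
        rw [hkey, hrhs, div_le_div_iff₀ (by positivity) (by positivity)]
        have hmul := mul_le_mul_of_nonneg_right hE2
          (show (0:ℝ) ≤ β ^ 2 * (1 - p) * p by
            exact mul_nonneg (mul_nonneg (sq_nonneg β) (by linarith)) h0)
        nlinarith [hmul]
    have hKE : K ^ Ec ≤ Real.exp (2 * alphaC β p) * (1 + (Real.exp (2 * alphaC β p *
        (Real.exp (4 * a) - 1)) - 1)) := by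
      have hpow : K ^ Ec = Real.exp ((Ec:ℝ) * (p * (1 - p) * a ^ 2 * Real.exp (4 * a))) := by
        rw [hK, ← Real.exp_nat_mul]
      have harg : (Ec:ℝ) * (p * (1 - p) * a ^ 2 * Real.exp (4 * a))
          ≤ 2 * alphaC β p * Real.exp (4 * a) := by
        have := mul_le_mul_of_nonneg_right hexp_bound (Real.exp_pos (4 * a)).le
        calc (Ec:ℝ) * (p * (1 - p) * a ^ 2 * Real.exp (4 * a))
            = (Ec:ℝ) * (p * (1 - p) * a ^ 2) * Real.exp (4 * a) := by ring
          _ ≤ 2 * alphaC β p * Real.exp (4 * a) := this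
      have hRHS : Real.exp (2 * alphaC β p) * (1 + (Real.exp (2 * alphaC β p *
          (Real.exp (4 * a) - 1)) - 1)) = Real.exp (2 * alphaC β p * Real.exp (4 * a)) := by
        rw [show (1:ℝ) + (Real.exp (2 * alphaC β p * (Real.exp (4 * a) - 1)) - 1)
          = Real.exp (2 * alphaC β p * (Real.exp (4 * a) - 1)) by ring, ← Real.exp_add]
        congr 1
        ring
      rw [hpow, hRHS]
      exact Real.exp_le_exp.mpr harg
    -- assembling everything
    rw [hEZ2, hEZ]
    have hSnn : (0:ℝ) ≤ ∑ σ : Conf N, g (mag σ) * ∏ e : CIdx N,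
        phiMGF p (a * (spin (σ e.1.1) * spin (σ e.1.2))) :=
      Finset.sum_nonneg fun σ _ => mul_nonneg (hw σ) (hPnn σ)
    calc ∑ σp : Conf N × Conf N, (g (mag σp.1) * g (mag σp.2))
            * ∏ e : CIdx N,
              phiMGF p (a * (spin (σp.1 e.1.1) * spin (σp.1 e.1.2))
                + a * (spin (σp.2 e.1.1) * spin (σp.2 e.1.2)))
        ≤ ∑ σp : Conf N × Conf N, (g (mag σp.1) * g (mag σp.2))
            * (K ^ Ec * ((∏ e : CIdx N, phiMGF p (a * (spin (σp.1 e.1.1) * spin (σp.1 e.1.2))))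
              * ∏ e : CIdx N, phiMGF p (a * (spin (σp.2 e.1.1) * spin (σp.2 e.1.2))))) :=
          Finset.sum_le_sum fun σp _ => mul_le_mul_of_nonneg_left (hprod σp)
            (mul_nonneg (hw σp.1) (hw σp.2))
      _ = K ^ Ec * ((∑ σ : Conf N, g (mag σ) * ∏ e : CIdx N,
            phiMGF p (a * (spin (σ e.1.1) * spin (σ e.1.2))))
          * ∑ σ : Conf N, g (mag σ) * ∏ e : CIdx N,
            phiMGF p (a * (spin (σ e.1.1) * spin (σ e.1.2)))) := by
          rw [Fintype.sum_mul_sum, Fintype.sum_prod_type, Finset.mul_sum]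
          refine Finset.sum_congr rfl fun σ _ => ?_
          rw [Finset.mul_sum]
          refine Finset.sum_congr rfl fun σ' _ => ?_
          dsimp only
          ring
      _ ≤ Real.exp (2 * alphaC β p) * (1 + (Real.exp (2 * alphaC β p *
            (Real.exp (4 * a) - 1)) - 1)) * ((∑ σ : Conf N, g (mag σ) * ∏ e : CIdx N,
            phiMGF p (a * (spin (σ e.1.1) * spin (σ e.1.2))))
          * ∑ σ : Conf N, g (mag σ) * ∏ e : CIdx N,
            phiMGF p (a * (spin (σ e.1.1) * spin (σ e.1.2)))) :=
          mul_le_mul_of_nonneg_right hKE (mul_nonneg hSnn hSnn)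
      _ = Real.exp (2 * alphaC β p) * (∑ σ : Conf N, g (mag σ) * ∏ e : CIdx N,
            phiMGF p (a * (spin (σ e.1.1) * spin (σ e.1.2)))) ^ 2
          * (1 + (Real.exp (2 * alphaC β p * (Real.exp (4 * a) - 1)) - 1)) := by
          ring

end RDCW
end
end

section
/- Let m₁<m₂∈Γ_N. Then the flow Ψ_N(σ,σ')=φ_N(m(σ),m(σ')) on S_N is a unitary antisymmetric flow from S_N[m₁] to S_N[m₂]; that is: (i) Ψ_N(σ,σ')=−Ψ_N(σ',σ) for all σ∼σ'; (ii) Kirchhoff's law: ∑_{σ'∼σ} Ψ_N(σ,σ')=0 for every σ∈S_N∖(S_N[m₁]∪S_N[m₂]); (iii) unit total flow: ∑_{a∈S_N[m₁]} ∑_{σ'∼a} Ψ_N(a,σ') = 1 = ∑_{b∈S_N[m₂]} ∑_{σ∼b} Ψ_N(σ,b). -/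
open MeasureTheory Filter Finset
open scoped Classical ENNReal NNReal Topology

noncomputable section

namespace RDCW

/-! ### Auxiliary machinery for the unit-flow theorem -/

/-- The magnetisation corresponding to `k` up-spins. -/
def gmag (N k : ℕ) : ℝ := (2 * k - N) / N

/-- Number of up spins. -/
def upc {N : ℕ} (σ : Conf N) : ℕ := (Finset.univ.filter fun i => σ i = true).card

lemma upc_le {N : ℕ} (σ : Conf N) : upc σ ≤ N := by
  classical
  simpa [upc] using Finset.card_filter_le Finset.univ (fun i => σ i = true)

lemma sum_spin {N : ℕ} (σ : Conf N) : ∑ i, spin (σ i) = 2 * upc σ - N := by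
  classical
  have h : ∀ i, spin (σ i) = (if σ i = true then (2:ℝ) else 0) - 1 := by
    intro i; cases h : σ i <;> simp [spin, h] <;> norm_num
  rw [Finset.sum_congr rfl fun i _ => h i, Finset.sum_sub_distrib]
  rw [Finset.sum_ite, Finset.sum_const, Finset.sum_const, Finset.sum_const]
  simp [upc]
  ring

lemma mag_eq {N : ℕ} (σ : Conf N) : mag σ = gmag N (upc σ) := by
  rw [mag, sum_spin, gmag, inv_mul_eq_div]

lemma gmag_le_gmag {N : ℕ} (hN : 0 < N) {k k' : ℕ} :
    gmag N k ≤ gmag N k' ↔ k ≤ k' := by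
  have hN' : (0:ℝ) < N := by exact_mod_cast hN
  rw [gmag, gmag, div_le_div_iff_of_pos_right hN', sub_le_sub_iff_right]
  constructor
  · intro h
    have : (k:ℝ) ≤ k' := by linarith
    exact_mod_cast this
  · intro h
    have : (k:ℝ) ≤ k' := by exact_mod_cast h
    linarith

lemma gmag_inj {N : ℕ} (hN : 0 < N) {k k' : ℕ} (h : gmag N k = gmag N k') : k = k' := by
  have h1 := (gmag_le_gmag hN).mp h.le
  have h2 := (gmag_le_gmag hN).mp h.ge
  omega

lemma gmag_succ {N : ℕ} (hN : 0 < N) (k : ℕ) : gmag N (k + 1) = gmag N k + 2 / N := by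
  have hN' : (N:ℝ) ≠ 0 := by exact_mod_cast hN.ne'
  rw [gmag, gmag]
  field_simp
  push_cast
  ring
lemma level_eq {N : ℕ} (hN : 0 < N) (k : ℕ) :
    level N (gmag N k) = Finset.univ.filter fun σ : Conf N => upc σ = k := by
  unfold level
  apply Finset.filter_congr
  intro σ _
  rw [mag_eq]
  constructor
  · exact fun h => gmag_inj hN h
  · rintro rfl; rfl

lemma card_upc {N k : ℕ} :
    (Finset.univ.filter fun σ : Conf N => upc σ = k).card = N.choose k := by
  classical
  have h : N.choose k = (Finset.powersetCard k (Finset.univ : Finset (Fin N))).card := by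
    rw [Finset.card_powersetCard, Finset.card_univ, Fintype.card_fin]
  rw [h]
  apply Finset.card_bij (fun σ _ => Finset.univ.filter fun i => σ i = true)
  · intro σ hσ
    rw [Finset.mem_powersetCard]
    exact ⟨Finset.subset_univ _, (Finset.mem_filter.mp hσ).2⟩
  · intro σ hσ σ' hσ' h
    funext i
    have := Finset.ext_iff.mp h i
    simp only [Finset.mem_filter, Finset.mem_univ, true_and] at this
    cases hh : σ i <;> cases hh' : σ' i <;> simp [hh, hh'] at this ⊢
  · intro s hs
    rw [Finset.mem_powersetCard] at hs
    refine ⟨fun i => decide (i ∈ s), ?_, ?_⟩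
    · have hset : (Finset.univ.filter fun i : Fin N => decide (i ∈ s) = true) = s := by
        ext i; simp
      rw [Finset.mem_filter]; refine ⟨Finset.mem_univ _, ?_⟩
      show (Finset.univ.filter fun i : Fin N => decide (i ∈ s) = true).card = k
      rw [hset, hs.2]
    · ext i; simp

lemma level_card {N : ℕ} (hN : 0 < N) (k : ℕ) :
    (level N (gmag N k)).card = N.choose k := by
  rw [level_eq hN, card_upc]

/-- Flip the `i`-th spin. -/
def flp {N : ℕ} (σ : Conf N) (i : Fin N) : Conf N := Function.update σ i (!(σ i))

lemma flp_self {N : ℕ} (σ : Conf N) (i : Fin N) : flp σ i i = !(σ i) :=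
  Function.update_self i _ σ

lemma flp_ne {N : ℕ} (σ : Conf N) {i j : Fin N} (h : j ≠ i) : flp σ i j = σ j :=
  Function.update_of_ne h _ σ

lemma nbr_iff {N : ℕ} {σ σ' : Conf N} : Nbr σ σ' ↔ ∃ i, σ' = flp σ i := by
  classical
  unfold Nbr
  rw [Finset.card_eq_one]
  constructor
  · rintro ⟨i, hi⟩
    refine ⟨i, funext fun j => ?_⟩
    by_cases hj : j = i
    · subst hj
      have h1 : σ j ≠ σ' j := by
        have := Finset.ext_iff.mp hi j
        simp only [Finset.mem_filter, Finset.mem_univ, true_and,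
          Finset.mem_singleton] at this
        tauto
      rw [flp_self]
      revert h1; cases σ j <;> cases σ' j <;> simp
    · have h1 : ¬ σ j ≠ σ' j := by
        have := Finset.ext_iff.mp hi j
        simp only [Finset.mem_filter, Finset.mem_univ, true_and,
          Finset.mem_singleton] at this
        tauto
      rw [flp_ne σ hj]
      push_neg at h1
      exact h1.symm
  · rintro ⟨i, rfl⟩
    refine ⟨i, ?_⟩
    ext j
    simp only [Finset.mem_filter, Finset.mem_univ, true_and, Finset.mem_singleton]
    by_cases hj : j = i
    · subst hj
      simp [flp_self]
    · simp [flp_ne σ hj, hj]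

lemma flp_inj {N : ℕ} (σ : Conf N) : Function.Injective (flp σ) := by
  intro i j h
  by_contra hij
  have h1 : flp σ i i = !(σ i) := flp_self σ i
  rw [h, flp_ne σ hij] at h1
  cases σ i <;> simp at h1

lemma filter_nbr {N : ℕ} (σ : Conf N) :
    (Finset.univ.filter fun σ' => Nbr σ σ') = Finset.univ.image (flp σ) := by
  ext σ'
  simp only [Finset.mem_filter, Finset.mem_univ, true_and, Finset.mem_image, nbr_iff]
  constructor
  · rintro ⟨i, rfl⟩; exact ⟨i, rfl⟩
  · rintro ⟨i, rfl⟩; exact ⟨i, rfl⟩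

lemma mag_flp {N : ℕ} (σ : Conf N) (i : Fin N) :
    mag (flp σ i) = if σ i = true then mag σ - 2 / N else mag σ + 2 / N := by
  classical
  have key : ∑ j, spin (flp σ i j) = (∑ j, spin (σ j)) - 2 * spin (σ i) := by
    rw [← Finset.sum_erase_add _ _ (Finset.mem_univ i),
      ← Finset.sum_erase_add _ (fun j => spin (σ j)) (Finset.mem_univ i)]
    have h1 : ∀ j ∈ Finset.univ.erase i, spin (flp σ i j) = spin (σ j) :=
      fun j hj => by rw [flp_ne σ (Finset.ne_of_mem_erase hj)]
    rw [Finset.sum_congr rfl h1, flp_self]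
    have h2 : spin (!(σ i)) = - spin (σ i) := by cases σ i <;> simp [spin]
    rw [h2]; ring
  rw [mag, mag, key]
  cases h : σ i <;> simp only [h, if_true, if_false, spin] <;> simp <;> ring
lemma sum_nbr {N : ℕ} (σ : Conf N) (F : Conf N → ℝ) (G : ℝ → ℝ)
    (hF : ∀ σ', F σ' = G (mag σ')) :
    ∑ σ' ∈ Finset.univ.filter (fun σ' => Nbr σ σ'), F σ'
      = ((N:ℝ) - upc σ) * G (mag σ + 2 / N) + (upc σ : ℝ) * G (mag σ - 2 / N) := by
  classical
  rw [filter_nbr, Finset.sum_image (fun i _ j _ h => flp_inj σ h)]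
  have h : ∀ i ∈ Finset.univ, F (flp σ i)
      = if σ i = true then G (mag σ - 2 / N) else G (mag σ + 2 / N) := by
    intro i _
    rw [hF, mag_flp]
    split_ifs <;> rfl
  rw [Finset.sum_congr rfl h, Finset.sum_ite, Finset.sum_const, Finset.sum_const]
  have hcard : (Finset.univ.filter fun i : Fin N => ¬ σ i = true).card = N - upc σ := by
    have h2 := Finset.card_filter_add_card_filter_not
      (s := (Finset.univ : Finset (Fin N))) (p := fun i => σ i = true)
    simp only [Finset.card_univ, Fintype.card_fin] at h2
    have : (Finset.univ.filter fun i : Fin N => σ i = true).card = upc σ := rfl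
    omega
  rw [hcard, nsmul_eq_mul, nsmul_eq_mul]
  rw [Nat.cast_sub (upc_le σ)]
  show (upc σ : ℝ) * G (mag σ - 2 / N) + ((N:ℝ) - upc σ) * G (mag σ + 2 / N) = _
  ring

lemma exp_IN {N : ℕ} (hN : 0 < N) {k : ℕ} (hk : k ≤ N) :
    Real.exp (-(N:ℝ) * IN N (gmag N k)) = N.choose k := by
  rw [IN, level_card hN]
  have hc : (0:ℝ) < N.choose k := by exact_mod_cast Nat.choose_pos hk
  have hN' : (N:ℝ) ≠ 0 := by exact_mod_cast hN.ne'
  rw [show -(N:ℝ) * (-(N:ℝ)⁻¹ * Real.log (N.choose k)) = Real.log (N.choose k) by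
    field_simp]
  exact Real.exp_log hc

lemma coeff_plus {N : ℕ} (hN : 0 < N) (k : ℕ) :
    (1 - gmag N k) * N / 2 = (N:ℝ) - k := by
  have hN' : (N:ℝ) ≠ 0 := by exact_mod_cast hN.ne'
  rw [gmag]; field_simp; ring

lemma coeff_minus {N : ℕ} (hN : 0 < N) (k : ℕ) :
    (1 + gmag N k) * N / 2 = (k:ℝ) := by
  have hN' : (N:ℝ) ≠ 0 := by exact_mod_cast hN.ne'
  rw [gmag]; field_simp; ring

lemma choose_id {N k : ℕ} (hk : k < N) :
    ((N:ℝ) - k) * N.choose k = ((k:ℝ) + 1) * N.choose (k + 1) := by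
  have h := Nat.choose_succ_right_eq N k
  have h2 : ((N.choose (k+1) * (k+1) : ℕ) : ℝ) = ((N.choose k * (N - k) : ℕ) : ℝ) := by
    rw [h]
  push_cast [Nat.cast_sub hk.le] at h2
  linarith

lemma psi_plus {N : ℕ} (hN : 0 < N) {k₁ k₂ : ℕ} (hk₂ : k₂ ≤ N) (k : ℕ) :
    phiFlow N (gmag N k₁) (gmag N k₂) (gmag N k) (gmag N (k + 1)) =
      if k₁ ≤ k ∧ k + 1 ≤ k₂ then (((N:ℝ) - k) * N.choose k)⁻¹ else 0 := by
  have hN' : (0:ℝ) < N := by exact_mod_cast hN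
  rw [phiFlow, gmag_succ hN]
  by_cases h : k₁ ≤ k ∧ k + 1 ≤ k₂
  · have hA : gmag N k + 2 / N = gmag N k + 2 / N ∧ gmag N k₁ ≤ gmag N k ∧
        gmag N k ≤ gmag N k₂ - 2 / N := by
      refine ⟨rfl, (gmag_le_gmag hN).mpr h.1, ?_⟩
      rw [le_sub_iff_add_le, ← gmag_succ hN]
      exact (gmag_le_gmag hN).mpr h.2
    rw [if_pos hA, if_pos h, coeff_plus hN, exp_IN hN (by omega : k ≤ N)]
  · have hA : ¬ (gmag N k + 2 / N = gmag N k + 2 / N ∧ gmag N k₁ ≤ gmag N k ∧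
        gmag N k ≤ gmag N k₂ - 2 / N) := by
      rintro ⟨-, h1, h2⟩
      refine h ⟨(gmag_le_gmag hN).mp h1, ?_⟩
      rw [le_sub_iff_add_le, ← gmag_succ hN] at h2
      exact (gmag_le_gmag hN).mp h2
    have hB : ¬ (gmag N k + 2 / N = gmag N k - 2 / N ∧
        gmag N k₁ + 2 / N ≤ gmag N k ∧ gmag N k ≤ gmag N k₂) := by
      rintro ⟨he, -⟩
      have h0 : (0:ℝ) < 2 / N := by positivity
      linarith
    rw [if_neg hA, if_neg hB, if_neg h]
lemma psi_minus {N : ℕ} (hN : 0 < N) {k₁ k₂ : ℕ} (hk₂ : k₂ ≤ N) (k : ℕ) :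
    phiFlow N (gmag N k₁) (gmag N k₂) (gmag N (k + 1)) (gmag N k) =
      if k₁ ≤ k ∧ k + 1 ≤ k₂ then -((((k:ℝ) + 1) * N.choose (k + 1))⁻¹) else 0 := by
  have hN' : (0:ℝ) < N := by exact_mod_cast hN
  have hA : ¬ (gmag N k = gmag N (k + 1) + 2 / N ∧ gmag N k₁ ≤ gmag N (k + 1) ∧
      gmag N (k + 1) ≤ gmag N k₂ - 2 / N) := by
    rintro ⟨he, -⟩
    rw [← gmag_succ hN] at he
    have := gmag_inj hN he
    omega
  rw [phiFlow, if_neg hA]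
  have hm : gmag N k = gmag N (k + 1) - 2 / N := by rw [gmag_succ hN]; ring
  by_cases h : k₁ ≤ k ∧ k + 1 ≤ k₂
  · have hB : gmag N k = gmag N (k + 1) - 2 / N ∧ gmag N k₁ + 2 / N ≤ gmag N (k + 1) ∧
        gmag N (k + 1) ≤ gmag N k₂ := by
      refine ⟨hm, ?_, (gmag_le_gmag hN).mpr h.2⟩
      rw [← gmag_succ hN]
      exact (gmag_le_gmag hN).mpr (by omega : k₁ + 1 ≤ k + 1)
    rw [if_pos hB, if_pos h, coeff_minus hN, exp_IN hN (by omega : k + 1 ≤ N)]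
    push_cast
    ring
  · have hB : ¬ (gmag N k = gmag N (k + 1) - 2 / N ∧ gmag N k₁ + 2 / N ≤ gmag N (k + 1) ∧
        gmag N (k + 1) ≤ gmag N k₂) := by
      rintro ⟨-, h1, h2⟩
      rw [← gmag_succ hN] at h1
      have h1' := (gmag_le_gmag hN).mp h1
      exact h ⟨by omega, (gmag_le_gmag hN).mp h2⟩
    rw [if_neg hB, if_neg h]

lemma nbr_comm {N : ℕ} (σ σ' : Conf N) : Nbr σ σ' ↔ Nbr σ' σ := by
  unfold Nbr
  rw [show (Finset.univ.filter fun i => σ i ≠ σ' i)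
      = Finset.univ.filter fun i => σ' i ≠ σ i from by
    apply Finset.filter_congr; intro i _; exact ne_comm]
/-- `Ψ_N` is a unitary antisymmetric flow from `S_N[m₁]` to `S_N[m₂]`. -/
theorem flow_unitary (N : ℕ) (m₁ m₂ : ℝ) (h₁ : m₁ ∈ Gamma N) (h₂ : m₂ ∈ Gamma N)
    (h12 : m₁ < m₂) :
    (∀ σ σ' : Conf N, Nbr σ σ' →
      phiFlow N m₁ m₂ (mag σ) (mag σ') = -phiFlow N m₁ m₂ (mag σ') (mag σ)) ∧
    (∀ σ : Conf N, mag σ ≠ m₁ → mag σ ≠ m₂ →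
      ∑ σ' ∈ Finset.univ.filter (fun σ' => Nbr σ σ'),
        phiFlow N m₁ m₂ (mag σ) (mag σ') = 0) ∧
    (∑ a ∈ level N m₁, ∑ σ' ∈ Finset.univ.filter (fun σ' => Nbr a σ'),
        phiFlow N m₁ m₂ (mag a) (mag σ') = 1) ∧
    (∑ b ∈ level N m₂, ∑ σ ∈ Finset.univ.filter (fun σ => Nbr σ b),
        phiFlow N m₁ m₂ (mag σ) (mag b) = 1) := by
  classical
  rcases Nat.eq_zero_or_pos N with hN0 | hN
  · exfalso
    obtain ⟨σa, ha⟩ := h₁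
    obtain ⟨σb, hb⟩ := h₂
    subst hN0
    have e : ∀ σ : Conf 0, mag σ = 0 := by intro σ; simp [mag]
    rw [← ha, ← hb] at h12
    simp [e] at h12
  obtain ⟨σa, ha⟩ := h₁
  obtain ⟨σb, hb⟩ := h₂
  set k₁ := upc σa with hk₁def
  set k₂ := upc σb with hk₂def
  have hm₁ : m₁ = gmag N k₁ := by rw [← ha]; exact mag_eq σa
  have hm₂ : m₂ = gmag N k₂ := by rw [← hb]; exact mag_eq σb
  have hk₂N : k₂ ≤ N := upc_le σb
  have hk₁₂ : k₁ < k₂ := by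
    by_contra hc
    push_neg at hc
    have h' := (gmag_le_gmag hN).mpr hc
    rw [← hm₁, ← hm₂] at h'
    linarith
  subst hm₁; subst hm₂
  refine ⟨?_, ?_, ?_, ?_⟩
  · -- (i) antisymmetry
    intro σ σ' hnb
    obtain ⟨i, rfl⟩ := nbr_iff.mp hnb
    have hkN := upc_le σ
    rw [mag_flp]
    cases hbi : σ i
    · rw [if_neg (by simp [hbi]), mag_eq σ, ← gmag_succ hN]
      rw [psi_plus hN hk₂N, psi_minus hN hk₂N]
      by_cases h : k₁ ≤ upc σ ∧ upc σ + 1 ≤ k₂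
      · rw [if_pos h, if_pos h, neg_neg, choose_id (by omega : upc σ < N)]
      · rw [if_neg h, if_neg h, neg_zero]
    · have hk1 : 1 ≤ upc σ := by
        refine Finset.card_pos.mpr ⟨i, ?_⟩
        simp [upc, hbi]
      obtain ⟨j, hj⟩ : ∃ j, upc σ = j + 1 := ⟨upc σ - 1, by omega⟩
      rw [if_pos rfl, mag_eq σ, hj]
      rw [show gmag N (j + 1) - 2 / N = gmag N j from by rw [gmag_succ hN]; ring]
      rw [psi_minus hN hk₂N j, psi_plus hN hk₂N j]
      by_cases h : k₁ ≤ j ∧ j + 1 ≤ k₂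
      · rw [if_pos h, if_pos h, choose_id (by omega : j < N)]
      · rw [if_neg h, if_neg h, neg_zero]
  · -- (ii) Kirchhoff
    intro σ hne1 hne2
    have hkN := upc_le σ
    have hne1' : upc σ ≠ k₁ := fun h => hne1 (by rw [mag_eq σ, h])
    have hne2' : upc σ ≠ k₂ := fun h => hne2 (by rw [mag_eq σ, h])
    rw [sum_nbr σ _ (phiFlow N (gmag N k₁) (gmag N k₂) (mag σ)) (fun _ => rfl)]
    rw [mag_eq σ]
    rcases Nat.eq_zero_or_pos (upc σ) with h0 | hpos
    · rw [h0, ← gmag_succ hN, psi_plus hN hk₂N 0, if_neg (by omega)]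
      norm_num
    · obtain ⟨j, hj⟩ : ∃ j, upc σ = j + 1 := ⟨upc σ - 1, by omega⟩
      rw [hj, ← gmag_succ hN, psi_plus hN hk₂N (j + 1)]
      rw [show gmag N (j + 1) - 2 / N = gmag N j from by rw [gmag_succ hN]; ring]
      rw [psi_minus hN hk₂N j]
      by_cases hlt : j + 1 < k₁
      · rw [if_neg (by omega), if_neg (by omega)]
        ring
      · by_cases hgt : k₂ < j + 1
        · rw [if_neg (by omega), if_neg (by omega)]
          ring
        · rw [if_pos ⟨by omega, by omega⟩, if_pos ⟨by omega, by omega⟩]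
          have hC : ((N.choose (j + 1) : ℝ)) ≠ 0 := by
            exact_mod_cast (Nat.choose_pos (by omega : j + 1 ≤ N)).ne'
          have hNk : ((N:ℝ) - ((j:ℝ) + 1)) ≠ 0 := by
            have : ((j:ℝ) + 1) < N := by exact_mod_cast (by omega : j + 1 < N)
            linarith
          have hj1 : ((j:ℝ) + 1) ≠ 0 := by positivity
          push_cast
          rw [mul_neg, mul_inv, mul_inv, ← mul_assoc, ← mul_assoc,
            mul_inv_cancel₀ hNk, mul_inv_cancel₀ hj1, one_mul]
          ring
  · -- (iii)a source
    have hstep : ∀ a ∈ level N (gmag N k₁),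
        (∑ σ' ∈ Finset.univ.filter (fun σ' => Nbr a σ'),
          phiFlow N (gmag N k₁) (gmag N k₂) (mag a) (mag σ')) = ((N.choose k₁ : ℝ))⁻¹ := by
      intro a haa
      have hka : upc a = k₁ := by
        have h' : mag a = gmag N k₁ := by
          have := (Finset.mem_filter.mp haa).2
          exact this
        rw [mag_eq] at h'
        exact gmag_inj hN h'
      rw [sum_nbr a _ (phiFlow N (gmag N k₁) (gmag N k₂) (mag a)) (fun _ => rfl)]
      rw [mag_eq a, hka, ← gmag_succ hN, psi_plus hN hk₂N k₁]
      rw [if_pos ⟨le_refl k₁, hk₁₂⟩]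
      have hzero : (k₁ : ℝ) * phiFlow N (gmag N k₁) (gmag N k₂) (gmag N k₁)
          (gmag N k₁ - 2 / N) = 0 := by
        rcases Nat.eq_zero_or_pos k₁ with h0 | hp
        · rw [h0]; norm_num
        · obtain ⟨j, hj⟩ : ∃ j, k₁ = j + 1 := ⟨k₁ - 1, by omega⟩
          rw [hj, show gmag N (j + 1) - 2 / N = gmag N j from by rw [gmag_succ hN]; ring,
            psi_minus hN hk₂N j, if_neg (by omega)]
          ring
      rw [hzero, add_zero]
      have hNk : ((N:ℝ) - (k₁:ℝ)) ≠ 0 := by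
        have : (k₁:ℝ) < N := by exact_mod_cast (by omega : k₁ < N)
        linarith
      rw [mul_inv, ← mul_assoc, mul_inv_cancel₀ hNk, one_mul]
    rw [Finset.sum_congr rfl hstep, Finset.sum_const, level_card hN, nsmul_eq_mul]
    exact mul_inv_cancel₀ (by
      exact_mod_cast (Nat.choose_pos (by omega : k₁ ≤ N)).ne')
  · -- (iii)b sink
    obtain ⟨j, hj⟩ : ∃ j, k₂ = j + 1 := ⟨k₂ - 1, by omega⟩
    rw [hj]
    have hstep : ∀ b ∈ level N (gmag N (j + 1)),
        (∑ σ ∈ Finset.univ.filter (fun σ => Nbr σ b),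
          phiFlow N (gmag N k₁) (gmag N (j + 1)) (mag σ) (mag b))
          = ((N.choose (j + 1) : ℝ))⁻¹ := by
      intro b hbb
      have hkb : upc b = j + 1 := by
        have h' : mag b = gmag N (j + 1) := (Finset.mem_filter.mp hbb).2
        rw [mag_eq] at h'
        exact gmag_inj hN h'
      have hmb : mag b = gmag N (j + 1) := by rw [mag_eq, hkb]
      have hfil : (Finset.univ.filter fun σ : Conf N => Nbr σ b)
          = Finset.univ.filter fun σ' => Nbr b σ' := by
        apply Finset.filter_congr
        intro σ _
        exact nbr_comm σ b
      rw [hfil]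
      rw [sum_nbr b _ (fun x => phiFlow N (gmag N k₁) (gmag N (j + 1)) x (mag b))
        (fun _ => rfl)]
      rw [hmb, hkb, ← gmag_succ hN]
      rw [show gmag N (j + 1) - 2 / N = gmag N j from by rw [gmag_succ hN]; ring]
      simp only [psi_plus hN (show j + 1 ≤ N by omega) j,
        psi_minus hN (show j + 1 ≤ N by omega) (j + 1)]
      rw [if_neg (by omega), if_pos ⟨(by omega : k₁ ≤ j), le_refl _⟩]
      rw [choose_id (by omega : j < N)]
      push_cast
      rw [mul_zero, zero_add, mul_inv, ← mul_assoc,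
        mul_inv_cancel₀ (by positivity : ((j:ℝ) + 1) ≠ 0), one_mul]
    rw [Finset.sum_congr rfl hstep, Finset.sum_const, level_card hN, nsmul_eq_mul]
    exact mul_inv_cancel₀ (by
      exact_mod_cast (Nat.choose_pos (by omega : j + 1 ≤ N)).ne')

end RDCW
end
end
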